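/- arXiv:2103.15699 — 2 statements merged into one kernel-verified Lean document; each statement's English description precedes it below -/
import Mathlib

section
/- A pair of bounded linear operators (B₁, B₂) from E to K is a Lebesgue type decomposition of B with respect to A if and only if there exists a closed subspace L of K satisfying L ⊆ closure(D(A,B)), L ∩ D(A,B) = {0}, and closure(L⊥ ∩ D(A,B)) = L⊥ ∩ closure(D(A,B)), such that B₁ = (I − P_M) ∘ B and B₂ = P_M ∘ B, where M = D(A,B)⊥ ⊕ L and P_M is the orthogonal projection of K onto M; moreover, distinct such subspaces L give distinct decompositions, so this correspondence between Lebesgue type decompositions of B with respect to A and such subspaces L is one-to-one. -/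
open ContinuousLinearMap
open scoped InnerProductSpace

/-- A witness for almost domination of `B : E → K` by `A : E → H`: a sequence of complex
Hilbert spaces `Kn n`, bounded operators `Bn n : E → Kn n` and constants `c n ≥ 0` such that
for all `f : E` one has `‖Bn n f‖ ≤ c n * ‖A f‖`, `‖Bn n f‖ ≤ ‖Bn (n+1) f‖` and `‖Bn n f‖`
converges (increasingly) to `‖B f‖`. -/
structure AlmostDominatedWitness
    {E H K : Type}
    [NormedAddCommGroup E] [InnerProductSpace ℂ E] [CompleteSpace E]
    [NormedAddCommGroup H] [InnerProductSpace ℂ H] [CompleteSpace H]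
    [NormedAddCommGroup K] [InnerProductSpace ℂ K] [CompleteSpace K]
    (A : E →L[ℂ] H) (B : E →L[ℂ] K) where
  Kn : ℕ → Type
  [nacg : ∀ n, NormedAddCommGroup (Kn n)]
  [ips : ∀ n, InnerProductSpace ℂ (Kn n)]
  [cs : ∀ n, CompleteSpace (Kn n)]
  Bn : ∀ n, E →L[ℂ] Kn n
  c : ℕ → ℝ
  c_nonneg : ∀ n, 0 ≤ c n
  bound : ∀ (n : ℕ) (f : E), ‖Bn n f‖ ≤ c n * ‖A f‖
  mono : ∀ (n : ℕ) (f : E), ‖Bn n f‖ ≤ ‖Bn (n + 1) f‖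
  tendsto : ∀ f : E, Filter.Tendsto (fun n => ‖Bn n f‖) Filter.atTop (nhds ‖B f‖)

/-- `B` is almost dominated by `A`. -/
def AlmostDominated
    {E H K : Type}
    [NormedAddCommGroup E] [InnerProductSpace ℂ E] [CompleteSpace E]
    [NormedAddCommGroup H] [InnerProductSpace ℂ H] [CompleteSpace H]
    [NormedAddCommGroup K] [InnerProductSpace ℂ K] [CompleteSpace K]
    (A : E →L[ℂ] H) (B : E →L[ℂ] K) : Prop :=
  Nonempty (AlmostDominatedWitness A B)

/-- `B` is singular with respect to `A`: every bounded operator `D : E → E` dominated by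
both `A` and `B` is zero. -/
def SingularWith
    {E H K : Type}
    [NormedAddCommGroup E] [InnerProductSpace ℂ E] [CompleteSpace E]
    [NormedAddCommGroup H] [InnerProductSpace ℂ H] [CompleteSpace H]
    [NormedAddCommGroup K] [InnerProductSpace ℂ K] [CompleteSpace K]
    (A : E →L[ℂ] H) (B : E →L[ℂ] K) : Prop :=
  ∀ D : E →L[ℂ] E,
    (∃ c : ℝ, 0 < c ∧ ∀ f : E, ‖D f‖ ≤ c * ‖A f‖) →
    (∃ c : ℝ, 0 < c ∧ ∀ f : E, ‖D f‖ ≤ c * ‖B f‖) → D = 0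

/-- The subspace `D(A,B) = {k ∈ K : B* k ∈ ran A*}`. -/
noncomputable def DAB
    {E H K : Type}
    [NormedAddCommGroup E] [InnerProductSpace ℂ E] [CompleteSpace E]
    [NormedAddCommGroup H] [InnerProductSpace ℂ H] [CompleteSpace H]
    [NormedAddCommGroup K] [InnerProductSpace ℂ K] [CompleteSpace K]
    (A : E →L[ℂ] H) (B : E →L[ℂ] K) : Submodule ℂ K :=
  Submodule.comap (adjoint B : K →ₗ[ℂ] E) (LinearMap.range (adjoint A : H →ₗ[ℂ] E))

/-- `(B₁, B₂)` is a Lebesgue type decomposition of `B` with respect to `A`: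
`B = B₁ + B₂`, `ran B₁ ⊥ ran B₂`, `B₁` is almost dominated by `A`, and `B₂` is singular
with respect to `A`. -/
def IsLebesgueTypeDecomp
    {E H K : Type}
    [NormedAddCommGroup E] [InnerProductSpace ℂ E] [CompleteSpace E]
    [NormedAddCommGroup H] [InnerProductSpace ℂ H] [CompleteSpace H]
    [NormedAddCommGroup K] [InnerProductSpace ℂ K] [CompleteSpace K]
    (A : E →L[ℂ] H) (B B₁ B₂ : E →L[ℂ] K) : Prop :=
  B = B₁ + B₂ ∧ (∀ f g : E, ⟪B₁ f, B₂ g⟫_ℂ = 0) ∧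
    AlmostDominated A B₁ ∧ SingularWith A B₂

/-- The data of a closed subspace `L ⊆ K` parametrizing a Lebesgue type decomposition,
together with the orthogonal projection `PM` of `K` onto `M = D(A,B)ᗮ ⊕ L`: `L` is closed,
`L ⊆ closure D(A,B)`, `L ∩ D(A,B) = {0}`, `closure (Lᗮ ∩ D(A,B)) = Lᗮ ∩ closure D(A,B)`,
and `PM` is characterized by `PM k ∈ M` and `k - PM k ⊥ M`. -/
def LebSubspaceData
    {E H K : Type}
    [NormedAddCommGroup E] [InnerProductSpace ℂ E] [CompleteSpace E]
    [NormedAddCommGroup H] [InnerProductSpace ℂ H] [CompleteSpace H]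
    [NormedAddCommGroup K] [InnerProductSpace ℂ K] [CompleteSpace K]
    (A : E →L[ℂ] H) (B : E →L[ℂ] K) (L : Submodule ℂ K) (PM : K →L[ℂ] K) : Prop :=
  IsClosed (L : Set K) ∧
  (L : Set K) ⊆ closure ((DAB A B : Submodule ℂ K) : Set K) ∧
  L ⊓ DAB A B = ⊥ ∧
  closure ((Lᗮ : Set K) ∩ ((DAB A B : Submodule ℂ K) : Set K)) =
    (Lᗮ : Set K) ∩ closure ((DAB A B : Submodule ℂ K) : Set K) ∧
  (∀ k : K, PM k ∈ (DAB A B)ᗮ ⊔ L ∧ k - PM k ∈ ((DAB A B)ᗮ ⊔ L)ᗮ)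
set_option linter.unusedSectionVars false
set_option maxHeartbeats 800000

section Aux

variable {E F G : Type}
  [NormedAddCommGroup E] [InnerProductSpace ℂ E] [CompleteSpace E]
  [NormedAddCommGroup F] [InnerProductSpace ℂ F] [CompleteSpace F]
  [NormedAddCommGroup G] [InnerProductSpace ℂ G] [CompleteSpace G]

lemma exists_repr_of_bound (C : E →L[ℂ] F) (ψ : E →L[ℂ] ℂ) (c : ℝ) (hc : 0 ≤ c)
    (h : ∀ f, ‖ψ f‖ ≤ c * ‖C f‖) :
    ∃ w : F, ‖w‖ ≤ c ∧ ∀ f, ψ f = ⟪w, C f⟫_ℂ := by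
  classical
  have key : ∀ u v : E, C u = C v → ψ u = ψ v := by
    intro u v huv
    have h1 : ‖ψ u - ψ v‖ ≤ c * ‖C u - C v‖ := by
      simpa [map_sub] using h (u - v)
    rw [huv, sub_self, norm_zero, mul_zero] at h1
    have := norm_le_zero_iff.mp h1
    exact sub_eq_zero.mp this
  let pick : ↥(LinearMap.range (C : E →ₗ[ℂ] F)) → E := fun y => (LinearMap.mem_range.mp y.2).choose
  have hpick : ∀ y : ↥(LinearMap.range (C : E →ₗ[ℂ] F)), C (pick y) = (y : F) := fun y =>
    (LinearMap.mem_range.mp y.2).choose_spec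
  let ℓ₀ : ↥(LinearMap.range (C : E →ₗ[ℂ] F)) →ₗ[ℂ] ℂ :=
    { toFun := fun y => ψ (pick y)
      map_add' := fun y z => by
        have h1 : C (pick (y + z)) = C (pick y + pick z) := by
          rw [map_add, hpick, hpick, hpick]; rfl
        show ψ (pick (y + z)) = ψ (pick y) + ψ (pick z)
        rw [key _ _ h1, map_add]
      map_smul' := fun a y => by
        have h1 : C (pick (a • y)) = C (a • pick y) := by
          rw [map_smul, hpick, hpick]; rfl
        show ψ (pick (a • y)) = a • ψ (pick y)
        rw [key _ _ h1, map_smul] }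
  have hb : ∀ y : ↥(LinearMap.range (C : E →ₗ[ℂ] F)), ‖ℓ₀ y‖ ≤ c * ‖y‖ := by
    intro y
    have := h (pick y)
    rw [hpick y] at this
    simpa [ℓ₀] using this
  let ℓ : ↥(LinearMap.range (C : E →ₗ[ℂ] F)) →L[ℂ] ℂ := ℓ₀.mkContinuous c hb
  obtain ⟨g, hg, hgnorm⟩ := exists_extension_norm_eq (LinearMap.range (C : E →ₗ[ℂ] F)) ℓ
  refine ⟨(InnerProductSpace.toDual ℂ F).symm g, ?_, ?_⟩
  · rw [LinearIsometryEquiv.norm_map]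
    rw [hgnorm]
    exact LinearMap.mkContinuous_norm_le ℓ₀ hc hb
  · intro f
    have hmem : C f ∈ LinearMap.range (C : E →ₗ[ℂ] F) := LinearMap.mem_range_self _ f
    have h2 : g (C f) = ℓ ⟨C f, hmem⟩ := hg ⟨C f, hmem⟩
    have h3 : ℓ ⟨C f, hmem⟩ = ψ f := by
      have : C (pick ⟨C f, hmem⟩) = C f := hpick ⟨C f, hmem⟩
      exact key _ _ this
    rw [InnerProductSpace.toDual_symm_apply, h2, h3]

lemma mem_range_adjoint_of_bound (C : E →L[ℂ] F) (Dd : E →L[ℂ] G) (c : ℝ)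
    (h : ∀ f, ‖Dd f‖ ≤ c * ‖C f‖) (x : G) : ∃ w : F, adjoint Dd x = adjoint C w := by
  have h' : ∀ f, ‖Dd f‖ ≤ max c 0 * ‖C f‖ := fun f =>
    le_trans (h f) (mul_le_mul_of_nonneg_right (le_max_left _ _) (norm_nonneg _))
  have hb : ∀ f, ‖((innerSL ℂ x).comp Dd) f‖ ≤ (‖x‖ * max c 0) * ‖C f‖ := by
    intro f
    calc ‖((innerSL ℂ x).comp Dd) f‖ = ‖⟪x, Dd f⟫_ℂ‖ := rfl
      _ ≤ ‖x‖ * ‖Dd f‖ := norm_inner_le_norm _ _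
      _ ≤ ‖x‖ * (max c 0 * ‖C f‖) := by
          exact mul_le_mul_of_nonneg_left (h' f) (norm_nonneg _)
      _ = (‖x‖ * max c 0) * ‖C f‖ := by ring
  obtain ⟨w, -, hw⟩ := exists_repr_of_bound C ((innerSL ℂ x).comp Dd) (‖x‖ * max c 0)
    (mul_nonneg (norm_nonneg _) (le_max_right _ _)) hb
  refine ⟨w, ext_inner_right ℂ fun f => ?_⟩
  rw [adjoint_inner_left, adjoint_inner_left]
  exact (hw f)

end Aux

section Aux2

variable {E H K : Type}
  [NormedAddCommGroup E] [InnerProductSpace ℂ E] [CompleteSpace E]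
  [NormedAddCommGroup H] [InnerProductSpace ℂ H] [CompleteSpace H]
  [NormedAddCommGroup K] [InnerProductSpace ℂ K] [CompleteSpace K]

lemma mem_DAB_iff_exists {A : E →L[ℂ] H} {B : E →L[ℂ] K} {k : K} :
    k ∈ DAB A B ↔ ∃ h : H, ∀ f, ⟪k, B f⟫_ℂ = ⟪h, A f⟫_ℂ := by
  constructor
  · intro hk
    obtain ⟨h, hh⟩ := LinearMap.mem_range.mp (Submodule.mem_comap.mp hk)
    exact ⟨h, fun f => by
      rw [← adjoint_inner_left, ← adjoint_inner_left (A := A), ← ContinuousLinearMap.coe_coe (adjoint A), hh, ContinuousLinearMap.coe_coe]⟩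
  · rintro ⟨h, hh⟩
    refine Submodule.mem_comap.mpr (LinearMap.mem_range.mpr ⟨h, ?_⟩)
    exact ext_inner_right ℂ fun f => by
      rw [ContinuousLinearMap.coe_coe, ContinuousLinearMap.coe_coe, adjoint_inner_left, adjoint_inner_left]; exact (hh f).symm

lemma mem_DAB_of_bound {A : E →L[ℂ] H} {B : E →L[ℂ] K} {k : K} (c : ℝ)
    (hb : ∀ f, ‖⟪k, B f⟫_ℂ‖ ≤ c * ‖A f‖) : k ∈ DAB A B := by
  have hb' : ∀ f, ‖((innerSL ℂ k).comp B) f‖ ≤ max c 0 * ‖A f‖ := fun f =>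
    le_trans (hb f) (mul_le_mul_of_nonneg_right (le_max_left _ _) (norm_nonneg _))
  obtain ⟨w, -, hw⟩ := exists_repr_of_bound A ((innerSL ℂ k).comp B) (max c 0)
    (le_max_right _ _) hb'
  exact mem_DAB_iff_exists.mpr ⟨w, fun f => hw f⟩

lemma quad_discriminant {α β γ : ℝ} (hα : 0 ≤ α) (hβ : 0 ≤ β) (hγ : 0 ≤ γ)
    (hq : ∀ t : ℝ, 0 ≤ α * t ^ 2 + 2 * γ * t + β) :
    γ ≤ Real.sqrt α * Real.sqrt β := by
  rcases eq_or_lt_of_le hα with hz | hpα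
  · have hγ0 : γ = 0 := by
      by_contra hne
      have hγpos : 0 < γ := lt_of_le_of_ne hγ (Ne.symm hne)
      have h := hq (-(β + 1) / (2 * γ))
      rw [← hz] at h
      have h2 : 2 * γ * (-(β + 1) / (2 * γ)) = -(β + 1) := by
        field_simp
      rw [zero_mul, zero_add, h2] at h
      linarith
    rw [hγ0]
    positivity
  · have h := hq (-γ / α)
    have h2 : α * (-γ / α) ^ 2 + 2 * γ * (-γ / α) + β = β - γ ^ 2 / α := by
      field_simp
      ring
    rw [h2] at h
    have h3 : γ ^ 2 / α ≤ β := by linarith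
    have h4 : γ ^ 2 ≤ α * β := by
      rw [div_le_iff₀ hpα] at h3
      linarith [h3]
    calc γ = Real.sqrt (γ ^ 2) := (Real.sqrt_sq hγ).symm
      _ ≤ Real.sqrt (α * β) := Real.sqrt_le_sqrt h4
      _ = Real.sqrt α * Real.sqrt β := Real.sqrt_mul hα _

lemma cauchy_schwarz_pos (S : E →L[ℂ] E) (hsym : ∀ u v : E, ⟪S u, v⟫_ℂ = ⟪u, S v⟫_ℂ)
    (hpos : ∀ u : E, 0 ≤ (⟪S u, u⟫_ℂ).re) (u v : E) :
    ‖⟪S u, v⟫_ℂ‖ ≤ Real.sqrt (⟪S u, u⟫_ℂ).re * Real.sqrt (⟪S v, v⟫_ℂ).re := by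
  rcases eq_or_ne (⟪S u, v⟫_ℂ) 0 with h0 | h0
  · rw [h0, norm_zero]
    positivity
  set c := ⟪S u, v⟫_ℂ with hc
  have hcc : (starRingEnd ℂ) c ≠ 0 := by simpa using h0
  obtain ⟨w, hSwv, hSww, hSvw⟩ :
      ∃ w : E, ⟪S w, v⟫_ℂ = ((‖c‖ : ℝ) : ℂ) ∧ ⟪S w, w⟫_ℂ = ⟪S u, u⟫_ℂ ∧
        ⟪S v, w⟫_ℂ = ((‖c‖ : ℝ) : ℂ) := by
    set a : ℂ := (‖c‖ : ℂ) / (starRingEnd ℂ) c with ha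
    have hconja : (starRingEnd ℂ) a = (‖c‖ : ℂ) / c := by
      rw [ha, map_div₀, Complex.conj_ofReal, Complex.conj_conj]
    have hmul : c * (starRingEnd ℂ) c = ((‖c‖ ^ 2 : ℝ) : ℂ) := by
      rw [Complex.mul_conj]
      norm_cast
      rw [Complex.normSq_eq_norm_sq]
    have h1 : ⟪S (a • u), v⟫_ℂ = ((‖c‖ : ℝ) : ℂ) := by
      rw [map_smul, inner_smul_left, hconja, ← hc]
      exact div_mul_cancel₀ _ h0
    refine ⟨a • u, h1, ?_, ?_⟩
    · rw [map_smul, inner_smul_left, inner_smul_right, ← mul_assoc, hconja, ha,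
        div_mul_div_comm]
      have hone : (‖c‖ : ℂ) * (‖c‖ : ℂ) / (c * (starRingEnd ℂ) c) = 1 := by
        rw [hmul]
        have h2 : ((‖c‖:ℂ) * (‖c‖:ℂ)) = ((‖c‖^2 : ℝ) : ℂ) := by push_cast; ring
        rw [h2]
        refine div_self ?_
        simp only [ne_eq, Complex.ofReal_eq_zero]
        exact pow_ne_zero 2 (norm_ne_zero_iff.mpr h0)
      rw [hone, one_mul]
    · calc ⟪S v, a • u⟫_ℂ = ⟪v, S (a • u)⟫_ℂ := hsym v _
        _ = (starRingEnd ℂ) ⟪S (a • u), v⟫_ℂ := (inner_conj_symm _ _).symm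
        _ = ((‖c‖ : ℝ) : ℂ) := by rw [h1, Complex.conj_ofReal]
  have hq : ∀ t : ℝ, 0 ≤ (⟪S u, u⟫_ℂ).re * t ^ 2 + 2 * ‖c‖ * t + (⟪S v, v⟫_ℂ).re := by
    intro t
    have h1 : ⟪S ((t:ℂ) • w + v), (t:ℂ) • w + v⟫_ℂ
        = (starRingEnd ℂ) ((t:ℝ):ℂ) * (((t:ℝ):ℂ) * ⟪S w, w⟫_ℂ)
          + (starRingEnd ℂ) ((t:ℝ):ℂ) * ⟪S w, v⟫_ℂ
          + ((t:ℝ):ℂ) * ⟪S v, w⟫_ℂ + ⟪S v, v⟫_ℂ := by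
      rw [map_add, map_smul, inner_add_left, inner_add_right, inner_add_right,
        inner_smul_left, inner_smul_right, inner_smul_left, inner_smul_right]
      ring
    have h2 := hpos ((t:ℂ) • w + v)
    rw [h1, hSww, hSwv, hSvw, Complex.conj_ofReal] at h2
    simp only [Complex.add_re, Complex.re_ofReal_mul, Complex.ofReal_re] at h2
    nlinarith [h2]
  exact quad_discriminant (hpos u) (hpos v) (norm_nonneg c) hq

lemma orthogonal_sup_eq (U V : Submodule ℂ K) : (U ⊔ V)ᗮ = Uᗮ ⊓ Vᗮ := by
  refine le_antisymm (le_inf (Submodule.orthogonal_le le_sup_left)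
    (Submodule.orthogonal_le le_sup_right)) ?_
  intro x hx
  rw [Submodule.mem_orthogonal]
  intro y hy
  obtain ⟨u, hu, v, hv, rfl⟩ := Submodule.mem_sup.mp hy
  rw [inner_add_left]
  rw [(Submodule.mem_orthogonal _ _).mp hx.1 u hu, (Submodule.mem_orthogonal _ _).mp hx.2 v hv,
    add_zero]

lemma isClosed_sup_of_orthogonal (U V : Submodule ℂ K) (hUc : IsClosed (U : Set K))
    (hVc : IsClosed (V : Set K)) (hUV : V ≤ Uᗮ) :
    IsClosed ((U ⊔ V : Submodule ℂ K) : Set K) := by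
  haveI : CompleteSpace U := hUc.completeSpace_coe
  haveI : CompleteSpace V := hVc.completeSpace_coe
  have hle : (U ⊔ V).topologicalClosure ≤ U ⊔ V := by
    intro k hk
    rw [← Submodule.orthogonal_orthogonal_eq_closure] at hk
    set a : K := (Submodule.orthogonalProjectionOnto U k : K) with haa
    set x : K := k - a with hx
    set b : K := (Submodule.orthogonalProjectionOnto V x : K) with hb
    set r : K := x - b with hr
    have hrU : r ∈ Uᗮ := by
      have h1 : x ∈ Uᗮ := Submodule.sub_starProjection_mem_orthogonal (K := U) k
      have h2 : b ∈ Uᗮ := hUV (Submodule.orthogonalProjectionOnto V x).2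
      exact Submodule.sub_mem _ h1 h2
    have hrV : r ∈ Vᗮ := Submodule.sub_starProjection_mem_orthogonal (K := V) x
    have hrsup : r ∈ (U ⊔ V)ᗮ := by
      rw [orthogonal_sup_eq]; exact ⟨hrU, hrV⟩
    have h3 : ⟪r, k⟫_ℂ = 0 := (Submodule.mem_orthogonal _ _).mp hk r hrsup
    have h4 : ⟪r, a⟫_ℂ = 0 :=
      Submodule.inner_left_of_mem_orthogonal (Submodule.mem_sup_left (Submodule.orthogonalProjectionOnto U k).2) hrsup
    have h5 : ⟪r, b⟫_ℂ = 0 :=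
      Submodule.inner_left_of_mem_orthogonal (Submodule.mem_sup_right (Submodule.orthogonalProjectionOnto V x).2) hrsup
    have hr0 : r = 0 := by
      have : ⟪r, r⟫_ℂ = 0 := by
        have hrk : r = k - a - b := by rw [hr, hx]
        rw [hrk, inner_sub_right, inner_sub_right, h3, h4, h5]
        ring
      exact inner_self_eq_zero.mp this
    have hk' : k = a + b := by
      have h6 : k - a - b = 0 := by rw [← hx, ← hr]; exact hr0
      rw [sub_sub] at h6
      have := sub_eq_zero.mp h6
      exact this
    rw [hk']
    exact Submodule.add_mem _ (Submodule.mem_sup_left (Submodule.orthogonalProjectionOnto U k).2)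
      (Submodule.mem_sup_right (Submodule.orthogonalProjectionOnto V x).2)
  have heq : U ⊔ V = (U ⊔ V).topologicalClosure :=
    le_antisymm (Submodule.le_topologicalClosure _) hle
  rw [heq]
  exact Submodule.isClosed_topologicalClosure _

lemma pm_selfadj {M : Submodule ℂ K} {PM : K →L[ℂ] K}
    (hPM : ∀ k : K, PM k ∈ M ∧ k - PM k ∈ Mᗮ) (x y : K) :
    ⟪PM x, y⟫_ℂ = ⟪x, PM y⟫_ℂ := by
  have e1 : ⟪PM x, y⟫_ℂ - ⟪PM x, PM y⟫_ℂ = 0 := by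
    rw [← inner_sub_right]
    exact Submodule.inner_right_of_mem_orthogonal (hPM x).1 (hPM y).2
  have e2 : ⟪x, PM y⟫_ℂ - ⟪PM x, PM y⟫_ℂ = 0 := by
    rw [← inner_sub_left]
    exact Submodule.inner_left_of_mem_orthogonal (hPM y).1 (hPM x).2
  linear_combination e1 - e2

lemma pm_adjoint_eq {M : Submodule ℂ K} {PM : K →L[ℂ] K}
    (hPM : ∀ k : K, PM k ∈ M ∧ k - PM k ∈ Mᗮ) : adjoint PM = PM := by
  refine ContinuousLinearMap.ext fun x => ext_inner_right ℂ fun y => ?_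
  rw [adjoint_inner_left, pm_selfadj hPM]

end Aux2

section Aux3

variable {E H K : Type}
  [NormedAddCommGroup E] [InnerProductSpace ℂ E] [CompleteSpace E]
  [NormedAddCommGroup H] [InnerProductSpace ℂ H] [CompleteSpace H]
  [NormedAddCommGroup K] [InnerProductSpace ℂ K] [CompleteSpace K]

lemma le_of_sq_le_sq'' {a b : ℝ} (hb : 0 ≤ b) (h : a ^ 2 ≤ b ^ 2) : a ≤ b := by
  nlinarith [sq_nonneg (a - b), sq_nonneg (a + b)]

lemma eq_of_sq_eq_sq' {a b : ℝ} (ha : 0 ≤ a) (hb : 0 ≤ b) (h : a ^ 2 = b ^ 2) : a = b := by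
  nlinarith [sq_nonneg (a - b), sq_nonneg (a + b)]

lemma norm_sub_orthogonalProjection_le {U : Submodule ℂ K} [CompleteSpace U] (y v : K)
    (hv : v ∈ U) : ‖y - Submodule.orthogonalProjectionOnto U y‖ ≤ ‖y - v‖ := by
  rw [← Submodule.starProjection_apply, Submodule.starProjection_minimal]
  have hbdd : BddBelow (Set.range fun w : U => ‖y - ↑w‖) := by
    refine ⟨(0:ℝ), ?_⟩
    rintro x ⟨w, rfl⟩
    exact norm_nonneg _
  exact ciInf_le hbdd (⟨v, hv⟩ : U)

lemma wnorm_sq (x : H) (y : K) :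
    ‖(WithLp.equiv 2 (H × K)).symm (x, y)‖ ^ 2 = ‖x‖ ^ 2 + ‖y‖ ^ 2 := by
  rw [WithLp.prod_norm_sq_eq_of_L2]; rfl

lemma wsub (x x' : H) (y y' : K) :
    (WithLp.equiv 2 (H × K)).symm (x, y) - (WithLp.equiv 2 (H × K)).symm (x', y') =
      (WithLp.equiv 2 (H × K)).symm (x - x', y - y') := rfl

variable {A : E →L[ℂ] H} {B : E →L[ℂ] K} {L : Submodule ℂ K} {PM : K →L[ℂ] K}

lemma lsd_Mperp_eq (hdata : LebSubspaceData A B L PM) :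
    ((((DAB A B)ᗮ ⊔ L)ᗮ : Submodule ℂ K) : Set K)
      = closure ((Lᗮ : Set K) ∩ ((DAB A B : Submodule ℂ K) : Set K)) := by
  obtain ⟨hLc, hLsub, hLinf, hLclos, hPM⟩ := hdata
  rw [hLclos, orthogonal_sup_eq, Submodule.orthogonal_orthogonal_eq_closure]
  ext x
  simp only [Submodule.coe_inf, Set.mem_inter_iff, SetLike.mem_coe,
    Submodule.topologicalClosure_coe, Set.mem_setOf_eq]
  tauto

lemma backward_almostDominated (hdata : LebSubspaceData A B L PM) :
    AlmostDominated A (B - PM ∘L B) := by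
  classical
  obtain ⟨hLc, hLsub, hLinf, hLclos, hPM⟩ := hdata
  set B₁ : E →L[ℂ] K := B - PM ∘L B with hB₁def
  have hB₁f : ∀ f, B₁ f = B f - PM (B f) := fun f => rfl
  have hB₁Mperp : ∀ f, B₁ f ∈ ((DAB A B)ᗮ ⊔ L)ᗮ := fun f => (hPM (B f)).2
  have hMperp_eq := lsd_Mperp_eq ⟨hLc, hLsub, hLinf, hLclos, hPM⟩
  -- each element of the dense subset gives an A-bounded functional against B₁
  have hS : ∀ k, k ∈ (Lᗮ : Set K) ∩ ((DAB A B : Submodule ℂ K) : Set K) →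
      ∃ h : H, ∀ g, ⟪k, B₁ g⟫_ℂ = ⟪h, A g⟫_ℂ := by
    rintro k ⟨hk1, hk2⟩
    obtain ⟨h, hh⟩ := mem_DAB_iff_exists.mp hk2
    refine ⟨h, fun g => ?_⟩
    have hkM : k ∈ ((DAB A B)ᗮ ⊔ L)ᗮ := by
      rw [orthogonal_sup_eq]
      exact Submodule.mem_inf.mpr ⟨Submodule.le_orthogonal_orthogonal _ hk2, hk1⟩
    have h0 : ⟪k, PM (B g)⟫_ℂ = 0 :=
      Submodule.inner_left_of_mem_orthogonal (hPM (B g)).1 hkM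
    rw [hB₁f, inner_sub_right, h0, sub_zero]
    exact hh g
  -- the approximating operators
  let e : WithLp 2 (H × K) ≃L[ℂ] H × K := WithLp.prodContinuousLinearEquiv 2 ℂ H K
  let ι : E →L[ℂ] WithLp 2 (H × K) :=
    (e.symm : (H × K) →L[ℂ] WithLp 2 (H × K)).comp ((0 : E →L[ℂ] H).prod B₁)
  let T : ℕ → E →L[ℂ] WithLp 2 (H × K) := fun n =>
    (e.symm : (H × K) →L[ℂ] WithLp 2 (H × K)).comp ((((n : ℂ)) • A).prod B₁)
  have hιf : ∀ f, ι f = (WithLp.equiv 2 (H × K)).symm (0, B₁ f) := fun f => rfl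
  have hTf : ∀ n g, T n g = (WithLp.equiv 2 (H × K)).symm ((n : ℂ) • A g, B₁ g) :=
    fun n g => rfl
  let V : ℕ → Submodule ℂ (WithLp 2 (H × K)) := fun n =>
    (LinearMap.range (T n : E →ₗ[ℂ] WithLp 2 (H × K))).topologicalClosure
  haveI hVcs : ∀ n, CompleteSpace (V n) := fun n =>
    (Submodule.isClosed_topologicalClosure _).completeSpace_coe
  let Bn : ℕ → E →L[ℂ] WithLp 2 (H × K) := fun n =>
    ι - ((V n).subtypeL.comp ((Submodule.orthogonalProjectionOnto (V n)).comp ι))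
  have hBnf : ∀ n f, Bn n f = ι f - Submodule.orthogonalProjectionOnto (V n) (ι f) := fun n f => rfl
  -- distance formula ingredients
  have hsubnorm : ∀ n g f, ‖ι f - T n g‖ ^ 2 = ((n : ℝ) * ‖A g‖) ^ 2 + ‖B₁ f - B₁ g‖ ^ 2 := by
    intro n g f
    rw [hιf, hTf, wsub, wnorm_sq]
    congr 1
    rw [zero_sub, norm_neg, norm_smul, Complex.norm_natCast]
  have key1 : ∀ n f g, ‖Bn n f‖ ≤ ‖ι f - T n g‖ := by
    intro n f g
    rw [hBnf]
    exact norm_sub_orthogonalProjection_le _ _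
      (Submodule.le_topologicalClosure _ (LinearMap.mem_range_self _ g))
  have key2 : ∀ n f, ∀ ε > (0:ℝ), ∃ g, ‖ι f - T n g‖ ≤ ‖Bn n f‖ + ε := by
    intro n f ε hε
    have hmem : (Submodule.orthogonalProjectionOnto (V n) (ι f) : WithLp 2 (H × K)) ∈ V n :=
      (Submodule.orthogonalProjectionOnto (V n) (ι f)).2
    have hcl : (Submodule.orthogonalProjectionOnto (V n) (ι f) : WithLp 2 (H × K)) ∈
        closure ((LinearMap.range (T n : E →ₗ[ℂ] WithLp 2 (H × K)) : Submodule ℂ (WithLp 2 (H × K))) : Set _) := by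
      rw [← Submodule.topologicalClosure_coe]
      exact hmem
    obtain ⟨b, hb, hdist⟩ := Metric.mem_closure_iff.mp hcl ε hε
    obtain ⟨g, rfl⟩ := LinearMap.mem_range.mp hb
    refine ⟨g, ?_⟩
    have htri : ‖ι f - T n g‖ ≤ ‖ι f - Submodule.orthogonalProjectionOnto (V n) (ι f)‖ +
        ‖(Submodule.orthogonalProjectionOnto (V n) (ι f) : WithLp 2 (H × K)) - T n g‖ := by
      have := norm_sub_le_norm_sub_add_norm_sub (ι f)
        ((Submodule.orthogonalProjectionOnto (V n) (ι f) : WithLp 2 (H × K))) (T n g)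
      exact this
    rw [← hBnf] at htri
    have : ‖(Submodule.orthogonalProjectionOnto (V n) (ι f) : WithLp 2 (H × K)) - T n g‖ ≤ ε := by
      rw [← dist_eq_norm]
      exact le_of_lt hdist
    linarith
  have hb_bdd : ∀ n f, ‖Bn n f‖ ≤ ‖B₁ f‖ := by
    intro n f
    calc ‖Bn n f‖ ≤ ‖ι f - T n 0‖ := key1 n f 0
      _ = ‖B₁ f‖ := by
          apply eq_of_sq_eq_sq' (norm_nonneg _) (norm_nonneg _)
          rw [hsubnorm]
          simp
  have hbound : ∀ n f, ‖Bn n f‖ ≤ (n : ℝ) * ‖A f‖ := by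
    intro n f
    have h1 := key1 n f f
    have h2 : ‖ι f - T n f‖ = (n : ℝ) * ‖A f‖ := by
      apply eq_of_sq_eq_sq' (norm_nonneg _) (by positivity)
      rw [hsubnorm]
      simp
    rw [h2] at h1
    exact h1
  have hmono : ∀ n f, ‖Bn n f‖ ≤ ‖Bn (n + 1) f‖ := by
    intro n f
    refine le_of_forall_pos_le_add fun ε hε => ?_
    obtain ⟨g, hg⟩ := key2 (n + 1) f ε hε
    have h1 : ‖ι f - T n g‖ ≤ ‖ι f - T (n + 1) g‖ := by
      apply le_of_sq_le_sq'' (norm_nonneg _)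
      rw [hsubnorm, hsubnorm]
      have : ((n : ℝ) * ‖A g‖) ^ 2 ≤ (((n + 1 : ℕ) : ℝ) * ‖A g‖) ^ 2 := by
        have hn : (n : ℝ) ≤ ((n + 1 : ℕ) : ℝ) := by exact_mod_cast Nat.le_succ n
        have := mul_le_mul_of_nonneg_right hn (norm_nonneg (A g))
        nlinarith [mul_nonneg (Nat.cast_nonneg (α := ℝ) n) (norm_nonneg (A g))]
      linarith
    calc ‖Bn n f‖ ≤ ‖ι f - T n g‖ := key1 n f g
      _ ≤ ‖ι f - T (n + 1) g‖ := h1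
      _ ≤ ‖Bn (n + 1) f‖ + ε := hg
  have htendsto : ∀ f, Filter.Tendsto (fun n => ‖Bn n f‖) Filter.atTop (nhds ‖B₁ f‖) := by
    intro f
    have hmonof : Monotone fun n => ‖Bn n f‖ := monotone_nat_of_le_succ fun n => hmono n f
    have hbddf : BddAbove (Set.range fun n => ‖Bn n f‖) := by
      refine ⟨‖B₁ f‖, ?_⟩
      rintro x ⟨n, rfl⟩
      exact hb_bdd n f
    have htend := tendsto_atTop_ciSup hmonof hbddf
    set s := ⨆ n, ‖Bn n f‖ with hs
    have hsle : s ≤ ‖B₁ f‖ := ciSup_le fun n => hb_bdd n f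
    rcases eq_or_lt_of_le hsle with heq | hlt
    · rwa [heq] at htend
    exfalso
    set r := (s + ‖B₁ f‖) / 2 with hr
    have hs0 : 0 ≤ s := le_trans (norm_nonneg (Bn 0 f)) (le_ciSup hbddf 0)
    have hsr : s < r := by rw [hr]; linarith
    have hrB : r < ‖B₁ f‖ := by rw [hr]; linarith
    have hr0 : 0 ≤ r := by linarith
    have hBpos : 0 < ‖B₁ f‖ := lt_of_le_of_lt hr0 hrB
    have hgex : ∀ n, ∃ g, ‖ι f - T n g‖ ≤ r := by
      intro n
      obtain ⟨g, hgle⟩ := key2 n f (r - s) (by linarith)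
      refine ⟨g, le_trans hgle ?_⟩
      have := le_ciSup hbddf n
      have h2 : ‖Bn n f‖ ≤ s := this
      linarith
    choose g hgr using hgex
    have hcomp : ∀ n : ℕ, ((n:ℝ) * ‖A (g n)‖) ≤ r ∧ ‖B₁ f - B₁ (g n)‖ ≤ r := by
      intro n
      have h1 := hsubnorm n (g n) f
      have h2 : ‖ι f - T n (g n)‖ ^ 2 ≤ r ^ 2 := by
        have := hgr n
        nlinarith [norm_nonneg (ι f - T n (g n))]
      rw [h1] at h2
      constructor
      · apply le_of_sq_le_sq'' hr0
        nlinarith [sq_nonneg (‖B₁ f - B₁ (g n)‖)]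
      · apply le_of_sq_le_sq'' hr0
        nlinarith [sq_nonneg ((n:ℝ) * ‖A (g n)‖)]
    have hbn_norm : ∀ n, ‖B₁ (g n)‖ ≤ ‖B₁ f‖ + r := by
      intro n
      have h1 : ‖B₁ (g n)‖ - ‖B₁ f‖ ≤ ‖B₁ (g n) - B₁ f‖ := norm_sub_norm_le _ _
      rw [norm_sub_rev] at h1
      linarith [(hcomp n).2]
    have hweak0 : ∀ k, k ∈ (Lᗮ : Set K) ∩ ((DAB A B : Submodule ℂ K) : Set K) →
        Filter.Tendsto (fun n => ⟪k, B₁ (g n)⟫_ℂ) Filter.atTop (nhds 0) := by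
      intro k hk
      obtain ⟨h, hh⟩ := hS k hk
      refine squeeze_zero_norm' ?_ (tendsto_const_div_atTop_nhds_zero_nat (‖h‖ * r))
      · filter_upwards [Filter.eventually_ge_atTop 1] with n hn
        rw [hh (g n)]
        have h2 : ‖A (g n)‖ ≤ r / n := by
          have hc := (hcomp n).1
          have hn' : (0:ℝ) < n := by exact_mod_cast hn
          rw [le_div_iff₀ hn']
          calc ‖A (g n)‖ * n = (n:ℝ) * ‖A (g n)‖ := mul_comm _ _
            _ ≤ r := hc
        calc ‖⟪h, A (g n)⟫_ℂ‖ ≤ ‖h‖ * ‖A (g n)‖ := norm_inner_le_norm _ _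
          _ ≤ ‖h‖ * (r / n) := mul_le_mul_of_nonneg_left h2 (norm_nonneg h)
          _ = ‖h‖ * r / n := by ring
    have hweak : ∀ k : K, k ∈ ((DAB A B)ᗮ ⊔ L)ᗮ →
        Filter.Tendsto (fun n => ⟪k, B₁ (g n)⟫_ℂ) Filter.atTop (nhds 0) := by
      intro k hk
      rw [NormedAddCommGroup.tendsto_nhds_zero]
      intro ε hε
      have hkcl : k ∈ closure ((Lᗮ : Set K) ∩ ((DAB A B : Submodule ℂ K) : Set K)) := by
        rw [← hMperp_eq]
        exact hk
      set Cb : ℝ := ‖B₁ f‖ + r + 1 with hCb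
      have hCb0 : 0 < Cb := by
        have := norm_nonneg (B₁ f)
        rw [hCb]; linarith
      obtain ⟨k', hk'mem, hk'dist⟩ := Metric.mem_closure_iff.mp hkcl (ε / (2 * Cb))
        (by positivity)
      have h1 := hweak0 k' hk'mem
      rw [NormedAddCommGroup.tendsto_nhds_zero] at h1
      filter_upwards [h1 (ε/2) (by positivity)] with n hn
      have hsplit : ⟪k, B₁ (g n)⟫_ℂ = ⟪k - k', B₁ (g n)⟫_ℂ + ⟪k', B₁ (g n)⟫_ℂ := by
        rw [inner_sub_left]; ring
      rw [hsplit]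
      have h2 : ‖⟪k - k', B₁ (g n)⟫_ℂ‖ ≤ ε / (2 * Cb) * Cb := by
        calc ‖⟪k - k', B₁ (g n)⟫_ℂ‖ ≤ ‖k - k'‖ * ‖B₁ (g n)‖ := norm_inner_le_norm _ _
          _ ≤ (ε / (2*Cb)) * Cb := by
              refine mul_le_mul (le_of_lt ?_) ?_ (norm_nonneg _) (by positivity)
              · rw [← dist_eq_norm]; exact hk'dist
              · have := hbn_norm n
                rw [hCb]; linarith
      have h3 : ε / (2*Cb) * Cb = ε/2 := by field_simp
      calc ‖⟪k - k', B₁ (g n)⟫_ℂ + ⟪k', B₁ (g n)⟫_ℂ‖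
          ≤ ‖⟪k - k', B₁ (g n)⟫_ℂ‖ + ‖⟪k', B₁ (g n)⟫_ℂ‖ := norm_add_le _ _
        _ < ε/2 + ε/2 := add_lt_add_of_le_of_lt (h3 ▸ h2) hn
        _ = ε := by ring
    have hfinal := hweak (B₁ f) (hB₁Mperp f)
    have h4 : Filter.Tendsto (fun n => ⟪B₁ f, B₁ f⟫_ℂ - ⟪B₁ f, B₁ (g n)⟫_ℂ)
        Filter.atTop (nhds (⟪B₁ f, B₁ f⟫_ℂ)) := by
      simpa using (tendsto_const_nhds (x := ⟪B₁ f, B₁ f⟫_ℂ)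
        (f := Filter.atTop (α := ℕ))).sub hfinal
    have h5 : ∀ n, ‖⟪B₁ f, B₁ f⟫_ℂ - ⟪B₁ f, B₁ (g n)⟫_ℂ‖ ≤ ‖B₁ f‖ * r := by
      intro n
      rw [← inner_sub_right]
      calc ‖⟪B₁ f, B₁ f - B₁ (g n)⟫_ℂ‖ ≤ ‖B₁ f‖ * ‖B₁ f - B₁ (g n)‖ :=
            norm_inner_le_norm _ _
        _ ≤ ‖B₁ f‖ * r := mul_le_mul_of_nonneg_left (hcomp n).2 (norm_nonneg _)
    have h6 : ‖⟪B₁ f, B₁ f⟫_ℂ‖ ≤ ‖B₁ f‖ * r :=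
      le_of_tendsto h4.norm (Filter.Eventually.of_forall h5)
    have h8 : ‖B₁ f‖ ^ 2 ≤ ‖B₁ f‖ * r := by
      have h7 : ‖⟪B₁ f, B₁ f⟫_ℂ‖ = ‖B₁ f‖ ^ 2 := by
        rw [inner_self_eq_norm_sq_to_K, norm_pow, RCLike.norm_ofReal,
          abs_of_nonneg (norm_nonneg _)]
      rw [h7] at h6
      exact h6
    nlinarith [h8, hBpos, hrB]
  exact ⟨⟨fun _ => WithLp 2 (H × K), fun n => Bn n, fun n => (n : ℝ),
    fun n => Nat.cast_nonneg n, hbound, hmono, htendsto⟩⟩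

end Aux3

section Aux4

variable {E H K : Type}
  [NormedAddCommGroup E] [InnerProductSpace ℂ E] [CompleteSpace E]
  [NormedAddCommGroup H] [InnerProductSpace ℂ H] [CompleteSpace H]
  [NormedAddCommGroup K] [InnerProductSpace ℂ K] [CompleteSpace K]

variable {A : E →L[ℂ] H} {B : E →L[ℂ] K} {L : Submodule ℂ K} {PM : K →L[ℂ] K}

lemma backward_decomp (hdata : LebSubspaceData A B L PM) :
    IsLebesgueTypeDecomp A B (B - PM ∘L B) (PM ∘L B) := by
  obtain ⟨hLc, hLsub, hLinf, hLclos, hPM⟩ := hdata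
  refine ⟨by ext f; simp, ?_, backward_almostDominated ⟨hLc, hLsub, hLinf, hLclos, hPM⟩, ?_⟩
  · intro f g
    exact Submodule.inner_left_of_mem_orthogonal (hPM (B g)).1 (hPM (B f)).2
  · rintro D ⟨cA, hcA, hbA⟩ ⟨cB, hcB, hbB⟩
    have hadj : ∀ x : E, adjoint D x = 0 := by
      intro x
      obtain ⟨h, hh⟩ := mem_range_adjoint_of_bound A D cA hbA x
      obtain ⟨k₀, hk₀⟩ := mem_range_adjoint_of_bound (PM ∘L B) D cB hbB x
      have h2 : adjoint (PM ∘L B) k₀ = adjoint B (PM k₀) := by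
        refine ext_inner_right ℂ fun f => ?_
        rw [adjoint_inner_left, adjoint_inner_left, comp_apply]
        exact (pm_selfadj hPM k₀ (B f)).symm
      set m : K := PM k₀ with hm
      have hmM : m ∈ (DAB A B)ᗮ ⊔ L := (hPM k₀).1
      have hm𝔇 : m ∈ DAB A B := by
        refine Submodule.mem_comap.mpr (LinearMap.mem_range.mpr ⟨h, ?_⟩)
        rw [ContinuousLinearMap.coe_coe, ContinuousLinearMap.coe_coe, ← hh, hk₀, h2]
      obtain ⟨d, hd, l, hl, hdl⟩ := Submodule.mem_sup.mp hmM
      have hd0 : d = 0 := by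
        have hdc : d ∈ (DAB A B).topologicalClosure := by
          have hmc : m ∈ (DAB A B).topologicalClosure :=
            Submodule.le_topologicalClosure _ hm𝔇
          have hlc : l ∈ (DAB A B).topologicalClosure := by
            rw [← SetLike.mem_coe, Submodule.topologicalClosure_coe]
            exact hLsub hl
          have hdml : d = m - l := by rw [← hdl]; abel
          rw [hdml]
          exact Submodule.sub_mem _ hmc hlc
        rw [← Submodule.orthogonal_orthogonal_eq_closure] at hdc
        have : ⟪d, d⟫_ℂ = 0 := (Submodule.mem_orthogonal _ _).mp hdc d hd
        exact inner_self_eq_zero.mp this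
      have hmL : m ∈ L := by
        rw [← hdl, hd0, zero_add]
        exact hl
      have hm0 : m = 0 := by
        have : m ∈ L ⊓ DAB A B := Submodule.mem_inf.mpr ⟨hmL, hm𝔇⟩
        rw [hLinf] at this
        exact this
      rw [hk₀, h2, hm0, map_zero]
    have hDadj : adjoint D = 0 := ContinuousLinearMap.ext hadj
    have : adjoint (adjoint D) = 0 := by rw [hDadj]; simp
    rwa [adjoint_adjoint] at this

end Aux4

section Aux5

variable {E H K : Type}
  [NormedAddCommGroup E] [InnerProductSpace ℂ E] [CompleteSpace E]
  [NormedAddCommGroup H] [InnerProductSpace ℂ H] [CompleteSpace H]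
  [NormedAddCommGroup K] [InnerProductSpace ℂ K] [CompleteSpace K]

lemma inner_self_re' (x : K) : (⟪x, x⟫_ℂ).re = ‖x‖ ^ 2 := by
  rw [inner_self_eq_norm_sq_to_K]
  norm_cast

lemma orthogonal_topologicalClosure_eq (U : Submodule ℂ K) :
    U.topologicalClosureᗮ = Uᗮ := by
  refine le_antisymm (Submodule.orthogonal_le (Submodule.le_topologicalClosure _)) ?_
  intro x hx
  rw [Submodule.mem_orthogonal]
  intro u hu
  have hcl : (U : Set K) ⊆ {y : K | ⟪y, x⟫_ℂ = 0} := fun y hy =>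
    (Submodule.mem_orthogonal _ _).mp hx y hy
  have hclosed : IsClosed {y : K | ⟪y, x⟫_ℂ = 0} :=
    isClosed_eq (Continuous.inner continuous_id continuous_const) continuous_const
  have := closure_minimal hcl hclosed
  rw [← SetLike.mem_coe, Submodule.topologicalClosure_coe] at hu
  exact this hu

lemma mem_closed_inner_right {c : K} {s : Set K} (hs : ∀ x ∈ s, ⟪x, c⟫_ℂ = 0) {k : K}
    (hk : k ∈ closure s) : ⟪k, c⟫_ℂ = 0 := by
  have hclosed : IsClosed {y : K | ⟪y, c⟫_ℂ = 0} :=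
    isClosed_eq (Continuous.inner continuous_id continuous_const) continuous_const
  exact closure_minimal hs hclosed hk

lemma mem_closed_inner_left {c : K} {s : Set K} (hs : ∀ x ∈ s, ⟪c, x⟫_ℂ = 0) {k : K}
    (hk : k ∈ closure s) : ⟪c, k⟫_ℂ = 0 := by
  have hclosed : IsClosed {y : K | ⟪c, y⟫_ℂ = 0} :=
    isClosed_eq (Continuous.inner continuous_const continuous_id) continuous_const
  exact closure_minimal hs hclosed hk

end Aux5

section Aux6

variable {E H K : Type}
  [NormedAddCommGroup E] [InnerProductSpace ℂ E] [CompleteSpace E]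
  [NormedAddCommGroup H] [InnerProductSpace ℂ H] [CompleteSpace H]
  [NormedAddCommGroup K] [InnerProductSpace ℂ K] [CompleteSpace K]

lemma dense_core {A : E →L[ℂ] H} {B₁ : E →L[ℂ] K} (Wit : AlmostDominatedWitness A B₁)
    (k : K) (hkP : k ∈ (LinearMap.range (B₁ : E →ₗ[ℂ] K)).topologicalClosure)
    (hkperp : k ∈ (DAB A B₁ ⊓ (LinearMap.range (B₁ : E →ₗ[ℂ] K)).topologicalClosure)ᗮ) : k = 0 := by
  classical
  letI := Wit.nacg
  letI := Wit.ips
  letI := Wit.cs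
  set P : Submodule ℂ K := (LinearMap.range (B₁ : E →ₗ[ℂ] K)).topologicalClosure with hP
  haveI : CompleteSpace P := (Submodule.isClosed_topologicalClosure _).completeSpace_coe
  have hBn_le : ∀ (n : ℕ) (f : E), ‖Wit.Bn n f‖ ≤ ‖B₁ f‖ := by
    intro n f
    exact (monotone_nat_of_le_succ fun m => Wit.mono m f).ge_of_tendsto (Wit.tendsto f) n
  have hkD₁ : ∀ d ∈ DAB A B₁, ⟪d, k⟫_ℂ = 0 := by
    intro d hd
    have h1 : d - (Submodule.orthogonalProjectionOnto P d : K) ∈ Pᗮ :=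
      Submodule.sub_starProjection_mem_orthogonal (K := P) d
    have h2 : d - (Submodule.orthogonalProjectionOnto P d : K) ∈ DAB A B₁ := by
      refine Submodule.mem_comap.mpr ?_
      have hz : adjoint B₁ (d - (Submodule.orthogonalProjectionOnto P d : K)) = 0 := by
        refine ext_inner_right ℂ fun f => ?_
        rw [adjoint_inner_left, inner_zero_left]
        have hr : (B₁ f) ∈ P := Submodule.le_topologicalClosure _ (LinearMap.mem_range_self _ f)
        exact Submodule.inner_left_of_mem_orthogonal hr h1
      rw [ContinuousLinearMap.coe_coe, hz]
      exact Submodule.zero_mem _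
    have h3 : (Submodule.orthogonalProjectionOnto P d : K) ∈ DAB A B₁ ⊓ P := by
      refine Submodule.mem_inf.mpr ⟨?_, (Submodule.orthogonalProjectionOnto P d).2⟩
      have he : (Submodule.orthogonalProjectionOnto P d : K) = d - (d - (Submodule.orthogonalProjectionOnto P d : K)) := by
        abel
      rw [he]
      exact Submodule.sub_mem _ hd h2
    have h4 : ⟪(Submodule.orthogonalProjectionOnto P d : K), k⟫_ℂ = 0 :=
      (Submodule.mem_orthogonal _ _).mp hkperp _ h3
    have h5 : ⟪d - (Submodule.orthogonalProjectionOnto P d : K), k⟫_ℂ = 0 :=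
      Submodule.inner_left_of_mem_orthogonal hkP h1
    have h6 : ⟪(Submodule.orthogonalProjectionOnto P d : K) + (d - (Submodule.orthogonalProjectionOnto P d : K)), k⟫_ℂ = 0 := by
      rw [inner_add_left, h4, h5, add_zero]
    simpa using h6
  have hW : ∀ (n : ℕ) (g : E), ∃ w : K, w ∈ DAB A B₁ ∧ ‖w‖ ≤ ‖B₁ g‖ ∧
      ∀ f, ⟪w, B₁ f⟫_ℂ = ⟪Wit.Bn n g, Wit.Bn n f⟫_ℂ := by
    intro n g
    have hbnd : ∀ f, ‖((innerSL ℂ (Wit.Bn n g)).comp (Wit.Bn n)) f‖ ≤ ‖B₁ g‖ * ‖B₁ f‖ := by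
      intro f
      calc ‖((innerSL ℂ (Wit.Bn n g)).comp (Wit.Bn n)) f‖
          = ‖⟪Wit.Bn n g, Wit.Bn n f⟫_ℂ‖ := rfl
        _ ≤ ‖Wit.Bn n g‖ * ‖Wit.Bn n f‖ := norm_inner_le_norm _ _
        _ ≤ ‖B₁ g‖ * ‖B₁ f‖ :=
            mul_le_mul (hBn_le n g) (hBn_le n f) (norm_nonneg _) (norm_nonneg _)
    obtain ⟨w, hwn, hwr⟩ := exists_repr_of_bound B₁ ((innerSL ℂ (Wit.Bn n g)).comp (Wit.Bn n))
      (‖B₁ g‖) (norm_nonneg _) hbnd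
    have hwr' : ∀ f, ⟪w, B₁ f⟫_ℂ = ⟪Wit.Bn n g, Wit.Bn n f⟫_ℂ := fun f => (hwr f).symm
    refine ⟨w, ?_, hwn, hwr'⟩
    refine mem_DAB_of_bound (A := A) (‖Wit.Bn n g‖ * Wit.c n) fun f => ?_
    rw [hwr' f]
    calc ‖⟪Wit.Bn n g, Wit.Bn n f⟫_ℂ‖ ≤ ‖Wit.Bn n g‖ * ‖Wit.Bn n f‖ := norm_inner_le_norm _ _
      _ ≤ ‖Wit.Bn n g‖ * (Wit.c n * ‖A f‖) :=
          mul_le_mul_of_nonneg_left (Wit.bound n f) (norm_nonneg _)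
      _ = ‖Wit.Bn n g‖ * Wit.c n * ‖A f‖ := by ring
  have hort : ∀ g, ⟪B₁ g, k⟫_ℂ = 0 := by
    intro g
    have habs : ∀ ε > (0:ℝ), ‖⟪B₁ g, k⟫_ℂ‖ ≤ ε := by
      intro ε hε
      set Cg : ℝ := ‖B₁ g‖ + 1 with hCg
      set Ck : ℝ := ‖k‖ + 1 with hCk
      have hCg0 : 0 < Cg := by positivity
      have hCk0 : 0 < Ck := by positivity
      set ε₁ : ℝ := min (ε / (4 * Cg)) 1 with hε₁
      have hε₁0 : 0 < ε₁ := lt_min (by positivity) one_pos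
      have hkcl : k ∈ closure ((LinearMap.range (B₁ : E →ₗ[ℂ] K) : Submodule ℂ K) : Set K) := by
        rw [← Submodule.topologicalClosure_coe]
        exact hkP
      obtain ⟨b, hb, hdistb⟩ := Metric.mem_closure_iff.mp hkcl ε₁ hε₁0
      obtain ⟨f₀, rfl⟩ := LinearMap.mem_range.mp hb
      set δ : ℝ := (ε / (4 * Ck)) ^ 2 with hδ
      have hδ0 : 0 < δ := by positivity
      have htsq : Filter.Tendsto (fun n => ‖Wit.Bn n g‖ * ‖Wit.Bn n g‖) Filter.atTop
          (nhds (‖B₁ g‖ * ‖B₁ g‖)) := (Wit.tendsto g).mul (Wit.tendsto g)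
      obtain ⟨n, hn⟩ := Metric.tendsto_atTop.mp htsq δ hδ0
      have hng := hn n (le_refl n)
      rw [Real.dist_eq] at hng
      have hdiag_g : ‖B₁ g‖ ^ 2 - ‖Wit.Bn n g‖ ^ 2 < δ := by
        rw [abs_sub_lt_iff] at hng
        nlinarith [hng.2]
      obtain ⟨w, hwD, hwnorm, hwip⟩ := hW n g
      set S : E →L[ℂ] E := (adjoint B₁).comp B₁ - (adjoint (Wit.Bn n)).comp (Wit.Bn n)
        with hSdef
      have hSapp : ∀ u v : E, ⟪S u, v⟫_ℂ = ⟪B₁ u, B₁ v⟫_ℂ - ⟪Wit.Bn n u, Wit.Bn n v⟫_ℂ := by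
        intro u v
        rw [hSdef, ContinuousLinearMap.sub_apply, inner_sub_left, comp_apply, comp_apply,
          adjoint_inner_left, adjoint_inner_left]
      have hsym : ∀ u v : E, ⟪S u, v⟫_ℂ = ⟪u, S v⟫_ℂ := by
        intro u v
        rw [hSapp, show ⟪u, S v⟫_ℂ = (starRingEnd ℂ) ⟪S v, u⟫_ℂ from (inner_conj_symm _ _).symm,
          hSapp, map_sub, inner_conj_symm, inner_conj_symm]
      have hposS : ∀ u : E, 0 ≤ (⟪S u, u⟫_ℂ).re := by
        intro u
        rw [hSapp, Complex.sub_re, inner_self_re', inner_self_re']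
        have := hBn_le n u
        nlinarith [norm_nonneg (Wit.Bn n u), norm_nonneg (B₁ u)]
      have hwk : ⟪w, k⟫_ℂ = 0 := hkD₁ w hwD
      have hkey : ⟪B₁ g, k⟫_ℂ = ⟪B₁ g, k - B₁ f₀⟫_ℂ + ⟪S g, f₀⟫_ℂ + ⟪w, B₁ f₀ - k⟫_ℂ := by
        rw [hSapp, inner_sub_right, inner_sub_right]
        linear_combination hwk - hwip f₀
      have hdk : ‖k - B₁ f₀‖ ≤ ε₁ := by
        rw [← dist_eq_norm]
        exact le_of_lt hdistb
      have e1 : ‖⟪B₁ g, k - B₁ f₀⟫_ℂ‖ ≤ ‖B₁ g‖ * ε₁ :=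
        le_trans (norm_inner_le_norm _ _) (mul_le_mul_of_nonneg_left hdk (norm_nonneg _))
      have hBf₀ : ‖B₁ f₀‖ ≤ Ck := by
        have h1 : ‖B₁ f₀‖ - ‖k‖ ≤ ‖B₁ f₀ - k‖ := norm_sub_norm_le _ _
        have h2 : ‖B₁ f₀ - k‖ ≤ ε₁ := by rw [norm_sub_rev]; exact hdk
        have h3 : ε₁ ≤ 1 := min_le_right _ _
        rw [hCk]; linarith
      have e2 : ‖⟪S g, f₀⟫_ℂ‖ ≤ ε / 4 := by
        have hcs := cauchy_schwarz_pos S hsym hposS g f₀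
        have hd1 : Real.sqrt ((⟪S g, g⟫_ℂ).re) ≤ ε / (4 * Ck) := by
          have h1 : (⟪S g, g⟫_ℂ).re ≤ δ := by
            rw [hSapp, Complex.sub_re, inner_self_re', inner_self_re']
            linarith [hdiag_g]
          calc Real.sqrt ((⟪S g, g⟫_ℂ).re) ≤ Real.sqrt δ := Real.sqrt_le_sqrt h1
            _ = ε / (4 * Ck) := by rw [hδ]; exact Real.sqrt_sq (by positivity)
        have hd2 : Real.sqrt ((⟪S f₀, f₀⟫_ℂ).re) ≤ Ck := by
          have h1 : (⟪S f₀, f₀⟫_ℂ).re ≤ Ck ^ 2 := by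
            rw [hSapp, Complex.sub_re, inner_self_re', inner_self_re']
            nlinarith [hBf₀, norm_nonneg (B₁ f₀), sq_nonneg (‖Wit.Bn n f₀‖)]
          calc Real.sqrt ((⟪S f₀, f₀⟫_ℂ).re) ≤ Real.sqrt (Ck ^ 2) := Real.sqrt_le_sqrt h1
            _ = Ck := Real.sqrt_sq hCk0.le
        calc ‖⟪S g, f₀⟫_ℂ‖ ≤ Real.sqrt ((⟪S g, g⟫_ℂ).re) * Real.sqrt ((⟪S f₀, f₀⟫_ℂ).re) := hcs
          _ ≤ (ε / (4 * Ck)) * Ck := mul_le_mul hd1 hd2 (Real.sqrt_nonneg _) (by positivity)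
          _ = ε / 4 := by field_simp
      have e3 : ‖⟪w, B₁ f₀ - k⟫_ℂ‖ ≤ ‖B₁ g‖ * ε₁ := by
        have h2 : ‖B₁ f₀ - k‖ ≤ ε₁ := by rw [norm_sub_rev]; exact hdk
        exact le_trans (norm_inner_le_norm _ _)
          (mul_le_mul hwnorm h2 (norm_nonneg _) (norm_nonneg _))
      have hε₁b : ‖B₁ g‖ * ε₁ ≤ ε / 4 := by
        have h1 : ε₁ ≤ ε / (4 * Cg) := min_le_left _ _
        have h2 : ‖B₁ g‖ ≤ Cg := by rw [hCg]; linarith [norm_nonneg (B₁ g)]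
        calc ‖B₁ g‖ * ε₁ ≤ Cg * (ε / (4 * Cg)) :=
              mul_le_mul h2 h1 hε₁0.le hCg0.le
          _ = ε / 4 := by field_simp
      calc ‖⟪B₁ g, k⟫_ℂ‖
          = ‖⟪B₁ g, k - B₁ f₀⟫_ℂ + ⟪S g, f₀⟫_ℂ + ⟪w, B₁ f₀ - k⟫_ℂ‖ := by rw [hkey]
        _ ≤ ‖⟪B₁ g, k - B₁ f₀⟫_ℂ + ⟪S g, f₀⟫_ℂ‖ + ‖⟪w, B₁ f₀ - k⟫_ℂ‖ := norm_add_le _ _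
        _ ≤ (‖⟪B₁ g, k - B₁ f₀⟫_ℂ‖ + ‖⟪S g, f₀⟫_ℂ‖) + ‖⟪w, B₁ f₀ - k⟫_ℂ‖ := by
            have := norm_add_le (⟪B₁ g, k - B₁ f₀⟫_ℂ) (⟪S g, f₀⟫_ℂ)
            linarith
        _ ≤ (ε / 4 + ε / 4) + ε / 4 := by linarith [e1, e2, e3, hε₁b]
        _ ≤ ε := by linarith
    have h0 : ‖⟪B₁ g, k⟫_ℂ‖ ≤ 0 :=
      le_of_forall_pos_le_add fun ε hε => by simpa using habs ε hε
    exact norm_le_zero_iff.mp h0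
  have hko : k ∈ (LinearMap.range (B₁ : E →ₗ[ℂ] K))ᗮ := by
    rw [Submodule.mem_orthogonal]
    rintro u ⟨gg, rfl⟩
    exact hort gg
  have hkP' : k ∈ (LinearMap.range (B₁ : E →ₗ[ℂ] K))ᗮᗮ := by
    rw [Submodule.orthogonal_orthogonal_eq_closure]
    exact hkP
  exact inner_self_eq_zero.mp ((Submodule.mem_orthogonal _ _).mp hkP' k hko)

end Aux6

section Aux7

variable {E H K : Type}
  [NormedAddCommGroup E] [InnerProductSpace ℂ E] [CompleteSpace E]
  [NormedAddCommGroup H] [InnerProductSpace ℂ H] [CompleteSpace H]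
  [NormedAddCommGroup K] [InnerProductSpace ℂ K] [CompleteSpace K]

lemma forward_decomp {A : E →L[ℂ] H} {B B₁ B₂ : E →L[ℂ] K}
    (hdec : IsLebesgueTypeDecomp A B B₁ B₂) :
    ∃ (L : Submodule ℂ K) (PM : K →L[ℂ] K),
      LebSubspaceData A B L PM ∧ B₁ = B - PM ∘L B ∧ B₂ = PM ∘L B := by
  classical
  obtain ⟨hsum, horth, hAD, hsing⟩ := hdec
  obtain ⟨Wit⟩ := hAD
  set 𝔇c : Submodule ℂ K := (DAB A B).topologicalClosure with h𝔇c
  haveI : CompleteSpace 𝔇c := (Submodule.isClosed_topologicalClosure _).completeSpace_coe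
  set P : Submodule ℂ K := (LinearMap.range (B₁ : E →ₗ[ℂ] K)).topologicalClosure with hP
  haveI : CompleteSpace P := (Submodule.isClosed_topologicalClosure _).completeSpace_coe
  set Pd : K →L[ℂ] K := 𝔇c.subtypeL.comp (Submodule.orthogonalProjectionOnto 𝔇c) with hPddef
  have hPdapp : ∀ x : K, Pd x = (Submodule.orthogonalProjectionOnto 𝔇c x : K) := fun x => rfl
  set L : Submodule ℂ K := (LinearMap.range (Pd.comp B₂ : E →ₗ[ℂ] K)).topologicalClosure with hLdef
  have hBsum : ∀ f, B f = B₁ f + B₂ f := fun f => by rw [hsum]; rfl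
  have horthP : ∀ k, k ∈ P → ∀ g, ⟪k, B₂ g⟫_ℂ = 0 := by
    intro k hk g
    have hkc : k ∈ closure ((LinearMap.range (B₁ : E →ₗ[ℂ] K) : Submodule ℂ K) : Set K) := by
      rw [← Submodule.topologicalClosure_coe]
      exact hk
    refine mem_closed_inner_right ?_ hkc
    rintro x ⟨f, rfl⟩
    exact horth f g
  have hadjB : ∀ k, adjoint B k = adjoint B₁ k + adjoint B₂ k := by
    intro k
    refine ext_inner_right ℂ fun f => ?_
    rw [inner_add_left, adjoint_inner_left, adjoint_inner_left, adjoint_inner_left, hBsum f,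
      inner_add_right]
  have hB₂adj : ∀ k, k ∈ P → adjoint B₂ k = 0 := by
    intro k hk
    refine ext_inner_right ℂ fun f => ?_
    rw [adjoint_inner_left, inner_zero_left]
    exact horthP k hk f
  have hDD : ∀ k, k ∈ P → (k ∈ DAB A B ↔ k ∈ DAB A B₁) := by
    intro k hk
    have he : adjoint B k = adjoint B₁ k := by rw [hadjB k, hB₂adj k hk, add_zero]
    constructor
    · intro hm
      refine Submodule.mem_comap.mpr ?_
      rw [ContinuousLinearMap.coe_coe, ← he]
      exact Submodule.mem_comap.mp hm
    · intro hm
      refine Submodule.mem_comap.mpr ?_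
      rw [ContinuousLinearMap.coe_coe, he]
      exact Submodule.mem_comap.mp hm
  set Y : Submodule ℂ K := (DAB A B₁ ⊓ P).topologicalClosure with hYdef
  haveI : CompleteSpace Y := (Submodule.isClosed_topologicalClosure _).completeSpace_coe
  have hYP : Y ≤ P :=
    Submodule.topologicalClosure_minimal _ inf_le_right (Submodule.isClosed_topologicalClosure _)
  have hPY : P ≤ Y := by
    intro k hk
    have h1 : k - (Submodule.orthogonalProjectionOnto Y k : K) ∈ Yᗮ :=
      Submodule.sub_starProjection_mem_orthogonal (K := Y) k
    have h2 : (Submodule.orthogonalProjectionOnto Y k : K) ∈ P := hYP (Submodule.orthogonalProjectionOnto Y k).2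
    have h3 : k - (Submodule.orthogonalProjectionOnto Y k : K) ∈ P := Submodule.sub_mem _ hk h2
    have h4 : k - (Submodule.orthogonalProjectionOnto Y k : K) ∈ (DAB A B₁ ⊓ P)ᗮ := by
      rw [← orthogonal_topologicalClosure_eq]
      exact h1
    have h5 := dense_core Wit _ h3 h4
    have h6 : k = (Submodule.orthogonalProjectionOnto Y k : K) := sub_eq_zero.mp h5
    rw [h6]
    exact (Submodule.orthogonalProjectionOnto Y k).2
  have hD1P : DAB A B₁ ⊓ P = DAB A B ⊓ P := by
    ext x
    simp only [Submodule.mem_inf]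
    constructor
    · rintro ⟨h1, h2⟩
      exact ⟨(hDD x h2).mpr h1, h2⟩
    · rintro ⟨h1, h2⟩
      exact ⟨(hDD x h2).mp h1, h2⟩
  have hP𝔇c : P ≤ 𝔇c := by
    refine le_trans hPY ?_
    rw [hYdef, hD1P]
    exact Submodule.topologicalClosure_mono inf_le_left
  have hB₁𝔇c : ∀ f, B₁ f ∈ 𝔇c := fun f =>
    hP𝔇c (Submodule.le_topologicalClosure _ (LinearMap.mem_range_self _ f))
  have h𝔇cperp : 𝔇cᗮ = (DAB A B)ᗮ := orthogonal_topologicalClosure_eq _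
  have hPdself : ∀ x, x ∈ 𝔇c → Pd x = x := fun x hx =>
    (Submodule.starProjection_eq_self_iff (K := 𝔇c)).mpr hx
  have hPdadj : ∀ x y : K, ⟪Pd x, y⟫_ℂ = ⟪x, Pd y⟫_ℂ := fun x y =>
    Submodule.inner_starProjection_left_eq_right (K := 𝔇c) x y
  have hPdperp : ∀ x : K, x - Pd x ∈ (DAB A B)ᗮ := by
    intro x
    rw [← h𝔇cperp]
    exact Submodule.sub_starProjection_mem_orthogonal (K := 𝔇c) x
  have hLclosed : IsClosed (L : Set K) := Submodule.isClosed_topologicalClosure _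
  have hL𝔇c : L ≤ 𝔇c := by
    refine Submodule.topologicalClosure_minimal _ ?_ (Submodule.isClosed_topologicalClosure _)
    rintro x ⟨g, rfl⟩
    exact ((Submodule.orthogonalProjectionOnto 𝔇c (B₂ g)).2 : _)
  have hB₁L : ∀ f, ∀ l, l ∈ L → ⟪B₁ f, l⟫_ℂ = 0 := by
    intro f l hl
    have hlc : l ∈ closure ((LinearMap.range (Pd.comp B₂ : E →ₗ[ℂ] K) : Submodule ℂ K) : Set K) := by
      rw [← Submodule.topologicalClosure_coe]
      exact hl
    refine mem_closed_inner_left ?_ hlc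
    rintro x ⟨g, rfl⟩
    show ⟪B₁ f, Pd (B₂ g)⟫_ℂ = 0
    rw [← hPdadj, hPdself _ (hB₁𝔇c f)]
    exact horth f g
  have hPL : ∀ k, k ∈ P → ∀ l, l ∈ L → ⟪k, l⟫_ℂ = 0 := by
    intro k hk l hl
    have hkc : k ∈ closure ((LinearMap.range (B₁ : E →ₗ[ℂ] K) : Submodule ℂ K) : Set K) := by
      rw [← Submodule.topologicalClosure_coe]
      exact hk
    refine mem_closed_inner_right ?_ hkc
    rintro x ⟨f, rfl⟩
    exact hB₁L f l hl
  have hL𝔇pp : L ≤ (DAB A B)ᗮᗮ := by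
    rw [Submodule.orthogonal_orthogonal_eq_closure]
    exact hL𝔇c
  have hMclosed : IsClosed (((DAB A B)ᗮ ⊔ L : Submodule ℂ K) : Set K) :=
    isClosed_sup_of_orthogonal _ _ (DAB A B).isClosed_orthogonal hLclosed hL𝔇pp
  haveI : CompleteSpace ((DAB A B)ᗮ ⊔ L : Submodule ℂ K) := hMclosed.completeSpace_coe
  set M : Submodule ℂ K := (DAB A B)ᗮ ⊔ L with hMdef
  haveI : CompleteSpace M := hMclosed.completeSpace_coe
  set PM : K →L[ℂ] K := M.subtypeL.comp (Submodule.orthogonalProjectionOnto M) with hPMdef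
  have hPMapp : ∀ x, PM x = (Submodule.orthogonalProjectionOnto M x : K) := fun x => rfl
  have hPMprop : ∀ k : K, PM k ∈ M ∧ k - PM k ∈ Mᗮ := fun k =>
    ⟨(Submodule.orthogonalProjectionOnto M k).2, Submodule.sub_starProjection_mem_orthogonal (K := M) k⟩
  have hPdB₂L : ∀ g, Pd (B₂ g) ∈ L := by
    intro g
    refine Submodule.le_topologicalClosure _ ?_
    exact LinearMap.mem_range_self (Pd.comp B₂ : E →ₗ[ℂ] K) g
  have hB₂M : ∀ g, B₂ g ∈ M := by
    intro g
    have hsplit : B₂ g = (B₂ g - Pd (B₂ g)) + Pd (B₂ g) := by abel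
    rw [hsplit]
    exact Submodule.add_mem _ (Submodule.mem_sup_left (hPdperp (B₂ g)))
      (Submodule.mem_sup_right (hPdB₂L g))
  have hB₁M : ∀ f, B₁ f ∈ Mᗮ := by
    intro f
    rw [Submodule.mem_orthogonal]
    intro u hu
    obtain ⟨d, hd, l, hl, rfl⟩ := Submodule.mem_sup.mp hu
    rw [inner_add_left]
    have h1 : ⟪d, B₁ f⟫_ℂ = 0 := by
      have hBf : B₁ f ∈ (DAB A B)ᗮᗮ := by
        rw [Submodule.orthogonal_orthogonal_eq_closure]
        exact hB₁𝔇c f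
      exact (Submodule.mem_orthogonal _ _).mp hBf d hd
    have h2 : ⟪l, B₁ f⟫_ℂ = 0 := by
      rw [← inner_conj_symm, hB₁L f l hl, map_zero]
    rw [h1, h2, add_zero]
  have hPMB₂ : ∀ g, PM (B₂ g) = B₂ g := fun g => by
    rw [hPMapp]
    exact (Submodule.starProjection_eq_self_iff (K := M)).mpr (hB₂M g)
  have hPMB₁ : ∀ f, PM (B₁ f) = 0 := fun f => by
    rw [hPMapp, Submodule.orthogonalProjectionOnto_apply_of_mem_orthogonal (hB₁M f)]
    rfl
  have hB₂eq : B₂ = PM ∘L B := by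
    refine ContinuousLinearMap.ext fun f => ?_
    rw [comp_apply, hBsum f, map_add, hPMB₁, hPMB₂, zero_add]
  have hB₁eq : B₁ = B - PM ∘L B := by
    refine ContinuousLinearMap.ext fun f => ?_
    rw [ContinuousLinearMap.sub_apply, comp_apply, hBsum f, map_add, hPMB₁, hPMB₂, zero_add]
    abel
  have hLinf : L ⊓ DAB A B = ⊥ := by
    rw [eq_bot_iff]
    rintro k hk
    obtain ⟨hkL, hk𝔇⟩ := Submodule.mem_inf.mp hk
    have hB₂k0 : ∀ g, ⟪k, B₂ g⟫_ℂ = 0 := by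
      by_contra hcon
      push_neg at hcon
      obtain ⟨g₀, hg₀⟩ := hcon
      have hg₀0 : g₀ ≠ 0 := by
        intro h0
        rw [h0, map_zero, inner_zero_right] at hg₀
        exact hg₀ rfl
      have hk2B : ∀ g, ⟪k, B₂ g⟫_ℂ = ⟪k, B g⟫_ℂ := by
        intro g
        rw [hBsum g, inner_add_right]
        have hz : ⟪k, B₁ g⟫_ℂ = 0 := by
          rw [← inner_conj_symm, hB₁L g k hkL, map_zero]
        rw [hz, zero_add]
      obtain ⟨h, hh⟩ := mem_DAB_iff_exists.mp hk𝔇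
      set D : E →L[ℂ] E := ((innerSL ℂ k).comp B₂).smulRight g₀ with hDdef
      have hDf : ∀ f, D f = ⟪k, B₂ f⟫_ℂ • g₀ := fun f => rfl
      have hDA : ∃ c : ℝ, 0 < c ∧ ∀ f : E, ‖D f‖ ≤ c * ‖A f‖ := by
        refine ⟨‖h‖ * ‖g₀‖ + 1, by positivity, fun f => ?_⟩
        rw [hDf, norm_smul, hk2B f, hh f]
        calc ‖⟪h, A f⟫_ℂ‖ * ‖g₀‖ ≤ (‖h‖ * ‖A f‖) * ‖g₀‖ :=
              mul_le_mul_of_nonneg_right (norm_inner_le_norm _ _) (norm_nonneg _)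
          _ ≤ (‖h‖ * ‖g₀‖ + 1) * ‖A f‖ := by
              nlinarith [norm_nonneg (A f), norm_nonneg h, norm_nonneg g₀]
      have hDB : ∃ c : ℝ, 0 < c ∧ ∀ f : E, ‖D f‖ ≤ c * ‖B₂ f‖ := by
        refine ⟨‖k‖ * ‖g₀‖ + 1, by positivity, fun f => ?_⟩
        rw [hDf, norm_smul]
        calc ‖⟪k, B₂ f⟫_ℂ‖ * ‖g₀‖ ≤ (‖k‖ * ‖B₂ f‖) * ‖g₀‖ :=
              mul_le_mul_of_nonneg_right (norm_inner_le_norm _ _) (norm_nonneg _)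
          _ ≤ (‖k‖ * ‖g₀‖ + 1) * ‖B₂ f‖ := by
              nlinarith [norm_nonneg (B₂ f), norm_nonneg k, norm_nonneg g₀]
      have hD0 := hsing D hDA hDB
      have hDg₀ : D g₀ = 0 := by rw [hD0]; rfl
      rw [hDf g₀] at hDg₀
      rcases smul_eq_zero.mp hDg₀ with h' | h'
      · exact hg₀ h'
      · exact hg₀0 h'
    have hkk : ⟪k, k⟫_ℂ = 0 := by
      have hkL' : ∀ x, x ∈ L → ⟪k, x⟫_ℂ = 0 := by
        intro x hx
        have hxc : x ∈ closure ((LinearMap.range (Pd.comp B₂ : E →ₗ[ℂ] K) : Submodule ℂ K) : Set K) := by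
          rw [← Submodule.topologicalClosure_coe]
          exact hx
        refine mem_closed_inner_left ?_ hxc
        rintro y ⟨g, rfl⟩
        show ⟪k, Pd (B₂ g)⟫_ℂ = 0
        rw [← hPdadj, hPdself _ (hL𝔇c hkL)]
        exact hB₂k0 g
      exact hkL' k hkL
    rw [Submodule.mem_bot]
    exact inner_self_eq_zero.mp hkk
  have hLsub : (L : Set K) ⊆ closure ((DAB A B : Submodule ℂ K) : Set K) := by
    intro x hx
    rw [← Submodule.topologicalClosure_coe]
    exact hL𝔇c hx
  have hLclos : closure ((Lᗮ : Set K) ∩ ((DAB A B : Submodule ℂ K) : Set K)) =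
      (Lᗮ : Set K) ∩ closure ((DAB A B : Submodule ℂ K) : Set K) := by
    apply Set.Subset.antisymm
    · apply closure_minimal
      · exact Set.inter_subset_inter_right _ subset_closure
      · exact IsClosed.inter L.isClosed_orthogonal isClosed_closure
    · rintro k ⟨hkLperp, hkcl⟩
      have hkLperp' : k ∈ Lᗮ := hkLperp
      have hk𝔇c : k ∈ 𝔇c := by
        rw [← SetLike.mem_coe, Submodule.topologicalClosure_coe]
        exact hkcl
      set k₁ : K := (Submodule.orthogonalProjectionOnto P k : K) with hk₁def
      set k₂ : K := k - k₁ with hk₂def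
      have hk₁P : k₁ ∈ P := (Submodule.orthogonalProjectionOnto P k).2
      have hk₂Pperp : k₂ ∈ Pᗮ := Submodule.sub_starProjection_mem_orthogonal (K := P) k
      set Z : Submodule ℂ K := (Lᗮ ⊓ DAB A B).topologicalClosure with hZdef
      have h𝔇P_le : DAB A B ⊓ P ≤ Lᗮ ⊓ DAB A B := by
        rintro x hx
        obtain ⟨hx1, hx2⟩ := Submodule.mem_inf.mp hx
        refine Submodule.mem_inf.mpr ⟨?_, hx1⟩
        rw [Submodule.mem_orthogonal]
        intro l hl
        rw [← inner_conj_symm, hPL x hx2 l hl, map_zero]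
      have hk₁Z : k₁ ∈ Z := by
        have h1 : k₁ ∈ Y := hPY hk₁P
        rw [hYdef, hD1P] at h1
        exact Submodule.topologicalClosure_mono h𝔇P_le h1
      have hk₂mem : k₂ ∈ Lᗮ ⊓ DAB A B := by
        have hk₂𝔇c : k₂ ∈ 𝔇c := Submodule.sub_mem _ hk𝔇c (hP𝔇c hk₁P)
        have hk₂Lperp : k₂ ∈ Lᗮ := by
          refine Submodule.sub_mem _ hkLperp' ?_
          rw [Submodule.mem_orthogonal]
          intro l hl
          rw [← inner_conj_symm, hPL k₁ hk₁P l hl, map_zero]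
        refine Submodule.mem_inf.mpr ⟨hk₂Lperp, ?_⟩
        have hadj1 : adjoint B₁ k₂ = 0 := by
          refine ext_inner_right ℂ fun f => ?_
          rw [adjoint_inner_left, inner_zero_left]
          have hrf : B₁ f ∈ P :=
            Submodule.le_topologicalClosure _ (LinearMap.mem_range_self _ f)
          exact Submodule.inner_left_of_mem_orthogonal hrf hk₂Pperp
        have hadj2 : adjoint B₂ k₂ = 0 := by
          refine ext_inner_right ℂ fun g => ?_
          rw [adjoint_inner_left, inner_zero_left]
          have hsplit : B₂ g = (B₂ g - Pd (B₂ g)) + Pd (B₂ g) := by abel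
          rw [hsplit, inner_add_right]
          have h1 : ⟪k₂, B₂ g - Pd (B₂ g)⟫_ℂ = 0 := by
            refine Submodule.inner_right_of_mem_orthogonal hk₂𝔇c ?_
            rw [h𝔇cperp]
            exact hPdperp (B₂ g)
          have h2 : ⟪k₂, Pd (B₂ g)⟫_ℂ = 0 := by
            rw [← inner_conj_symm,
              (Submodule.mem_orthogonal _ _).mp hk₂Lperp _ (hPdB₂L g), map_zero]
          rw [h1, h2, add_zero]
        refine Submodule.mem_comap.mpr ?_
        rw [ContinuousLinearMap.coe_coe, hadjB k₂, hadj1, hadj2, add_zero]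
        exact Submodule.zero_mem _
      have hkZ : k ∈ Z := by
        have hksum : k = k₁ + k₂ := by rw [hk₂def]; abel
        rw [hksum]
        exact Submodule.add_mem _ hk₁Z (Submodule.le_topologicalClosure _ hk₂mem)
      have hZcoe : (Z : Set K) = closure ((Lᗮ ⊓ DAB A B : Submodule ℂ K) : Set K) :=
        Submodule.topologicalClosure_coe _
      have hinfcoe : ((Lᗮ ⊓ DAB A B : Submodule ℂ K) : Set K) =
          (Lᗮ : Set K) ∩ ((DAB A B : Submodule ℂ K) : Set K) := Submodule.coe_inf
      have : k ∈ (Z : Set K) := hkZ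
      rw [hZcoe, hinfcoe] at this
      exact this
  exact ⟨L, PM, ⟨hLclosed, hLsub, hLinf, hLclos, hPMprop⟩, hB₁eq, hB₂eq⟩

end Aux7

section Aux8

variable {E H K : Type}
  [NormedAddCommGroup E] [InnerProductSpace ℂ E] [CompleteSpace E]
  [NormedAddCommGroup H] [InnerProductSpace ℂ H] [CompleteSpace H]
  [NormedAddCommGroup K] [InnerProductSpace ℂ K] [CompleteSpace K]

lemma unique_L {A : E →L[ℂ] H} {B : E →L[ℂ] K} (L0 : Submodule ℂ K) (PM0 : K →L[ℂ] K)
    (hdata : LebSubspaceData A B L0 PM0) :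
    L0 = (LinearMap.range ((((DAB A B).topologicalClosure.subtypeL.comp
        (Submodule.orthogonalProjectionOnto (DAB A B).topologicalClosure)).comp (PM0 ∘L B) : E →ₗ[ℂ] K))).topologicalClosure := by
  classical
  obtain ⟨hLc, hLsub, hLinf, hLclos, hPM⟩ := hdata
  set 𝔇c : Submodule ℂ K := (DAB A B).topologicalClosure with h𝔇c
  haveI : CompleteSpace 𝔇c := (Submodule.isClosed_topologicalClosure _).completeSpace_coe
  set Pd : K →L[ℂ] K := 𝔇c.subtypeL.comp (Submodule.orthogonalProjectionOnto 𝔇c) with hPddef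
  set C : Submodule ℂ K := (LinearMap.range (Pd.comp (PM0 ∘L B) : E →ₗ[ℂ] K)).topologicalClosure with hCdef
  haveI : CompleteSpace C := (Submodule.isClosed_topologicalClosure _).completeSpace_coe
  have h𝔇cperp : 𝔇cᗮ = (DAB A B)ᗮ := orthogonal_topologicalClosure_eq _
  have hL𝔇c : L0 ≤ 𝔇c := by
    intro x hx
    rw [← SetLike.mem_coe, Submodule.topologicalClosure_coe]
    exact hLsub hx
  have hPdself : ∀ x, x ∈ 𝔇c → Pd x = x := fun x hx =>
    (Submodule.starProjection_eq_self_iff (K := 𝔇c)).mpr hx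
  -- (a) C ≤ L0
  have hCL : C ≤ L0 := by
    refine Submodule.topologicalClosure_minimal _ ?_ hLc
    rintro x ⟨f, rfl⟩
    show Pd (PM0 (B f)) ∈ L0
    obtain ⟨d, hd, l, hl, hdl⟩ := Submodule.mem_sup.mp (hPM (B f)).1
    rw [← hdl, map_add]
    have h1 : Pd d = 0 := by
      show (↑(Submodule.orthogonalProjectionOnto 𝔇c d) : K) = 0
      rw [Submodule.orthogonalProjectionOnto_apply_of_mem_orthogonal]
      · rfl
      · rw [h𝔇cperp]
        exact hd
    have h2 : Pd l = l := hPdself l (hL𝔇c hl)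
    rw [h1, h2, zero_add]
    exact hl
  -- (b) L0 ≤ C
  have hLC : L0 ≤ C := by
    intro l hl
    set l₂ : K := l - (Submodule.orthogonalProjectionOnto C l : K) with hl₂def
    have hl₂C : l₂ ∈ Cᗮ := Submodule.sub_starProjection_mem_orthogonal (K := C) l
    have hl₂L : l₂ ∈ L0 := Submodule.sub_mem _ hl (hCL (Submodule.orthogonalProjectionOnto C l).2)
    have hl₂0 : l₂ = 0 := by
      have hBl : ∀ f, ⟪l₂, B f⟫_ℂ = 0 := by
        intro f
        have hsplit : B f = (B f - PM0 (B f)) + PM0 (B f) := by abel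
        rw [hsplit, inner_add_right]
        have h1 : ⟪l₂, B f - PM0 (B f)⟫_ℂ = 0 :=
          Submodule.inner_right_of_mem_orthogonal (Submodule.mem_sup_right hl₂L) (hPM (B f)).2
        have h2 : ⟪l₂, PM0 (B f)⟫_ℂ = 0 := by
          have hsplit2 : PM0 (B f) = (PM0 (B f) - Pd (PM0 (B f))) + Pd (PM0 (B f)) := by abel
          rw [hsplit2, inner_add_right]
          have h3 : ⟪l₂, PM0 (B f) - Pd (PM0 (B f))⟫_ℂ = 0 := by
            refine Submodule.inner_right_of_mem_orthogonal (hL𝔇c hl₂L) ?_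
            exact Submodule.sub_starProjection_mem_orthogonal (K := 𝔇c) (PM0 (B f))
          have h4 : ⟪l₂, Pd (PM0 (B f))⟫_ℂ = 0 := by
            refine Submodule.inner_left_of_mem_orthogonal ?_ hl₂C
            exact Submodule.le_topologicalClosure _
              (LinearMap.mem_range_self (Pd.comp (PM0 ∘L B) : E →ₗ[ℂ] K) f)
          rw [h3, h4, add_zero]
        rw [h1, h2, add_zero]
      have hadj : adjoint B l₂ = 0 := by
        refine ext_inner_right ℂ fun f => ?_
        rw [adjoint_inner_left, inner_zero_left]
        exact hBl f
      have hl₂𝔇 : l₂ ∈ DAB A B := by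
        refine Submodule.mem_comap.mpr ?_
        rw [ContinuousLinearMap.coe_coe, hadj]
        exact Submodule.zero_mem _
      have : l₂ ∈ L0 ⊓ DAB A B := Submodule.mem_inf.mpr ⟨hl₂L, hl₂𝔇⟩
      rw [hLinf] at this
      exact this
    have : l = (Submodule.orthogonalProjectionOnto C l : K) := by
      have := sub_eq_zero.mp hl₂0
      exact this
    rw [this]
    exact (Submodule.orthogonalProjectionOnto C l).2
  exact le_antisymm hLC hCL

end Aux8


/-- A pair `(B₁, B₂)` is a Lebesgue type decomposition of `B` with respect
to `A` if and only if there are a closed subspace `L` of `K` with `L ⊆ closure D(A,B)`,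
`L ∩ D(A,B) = {0}` and `closure (Lᗮ ∩ D(A,B)) = Lᗮ ∩ closure D(A,B)`, and the orthogonal
projection `PM` of `K` onto `M = D(A,B)ᗮ ⊕ L`, such that `B₁ = (I − PM) ∘ B` and
`B₂ = PM ∘ B`; moreover distinct such subspaces `L` give distinct decompositions, so the
correspondence is one-to-one. -/
theorem lebesgue_type_decompositions_parametrization
    {E H K : Type}
    [NormedAddCommGroup E] [InnerProductSpace ℂ E] [CompleteSpace E]
    [NormedAddCommGroup H] [InnerProductSpace ℂ H] [CompleteSpace H]
    [NormedAddCommGroup K] [InnerProductSpace ℂ K] [CompleteSpace K]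
    (A : E →L[ℂ] H) (B B₁ B₂ : E →L[ℂ] K) :
    (IsLebesgueTypeDecomp A B B₁ B₂ ↔
      ∃ (L : Submodule ℂ K) (PM : K →L[ℂ] K),
        LebSubspaceData A B L PM ∧ B₁ = B - PM ∘L B ∧ B₂ = PM ∘L B) ∧
    (∀ (L L' : Submodule ℂ K) (PM PM' : K →L[ℂ] K),
      LebSubspaceData A B L PM → LebSubspaceData A B L' PM' →
        PM ∘L B = PM' ∘L B → L = L') := by
  constructor
  · constructor
    · exact fun hdec => forward_decomp hdec
    · rintro ⟨L, PM, hdata, hB₁, hB₂⟩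
      rw [hB₁, hB₂]
      exact backward_decomp hdata
  · intro L L' PM PM' h1 h2 heq
    rw [unique_L L PM h1, unique_L L' PM' h2, heq]
end

section
/- Let B = B₁ + B₂ be any Lebesgue type decomposition of B with respect to A, and let B_reg = (I − P) ∘ B, where P is the orthogonal projection of K onto D(A,B)⊥. Then ‖B₁ h‖ ≤ ‖B_reg h‖ for all h ∈ E. -/
open ContinuousLinearMap
open scoped InnerProductSpace ComplexConjugate

lemma douglas_lemma {E F G : Type}
    [NormedAddCommGroup E] [InnerProductSpace ℂ E]
    [NormedAddCommGroup F] [InnerProductSpace ℂ F] [CompleteSpace F]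
    [NormedAddCommGroup G] [InnerProductSpace ℂ G]
    (T : E →L[ℂ] F) (S : E →L[ℂ] G) (c : ℝ) (hc : 0 ≤ c)
    (hdom : ∀ f, ‖S f‖ ≤ c * ‖T f‖) (w : G) :
    ∃ e : F, ‖e‖ ≤ c * ‖w‖ ∧ ∀ g : E, ⟪T g, e⟫_ℂ = ⟪S g, w⟫_ℂ := by
  classical
  set TL : E →ₗ[ℂ] F := (T : E →ₗ[ℂ] F) with hTL
  set ψ : E →ₗ[ℂ] ℂ := ((innerSL ℂ w).comp S).toLinearMap with hψdef
  have hψ : ∀ g : E, ψ g = ⟪w, S g⟫_ℂ := fun g => rfl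
  have hker : LinearMap.ker TL ≤ LinearMap.ker ψ := by
    intro g hg
    have hg' : T g = 0 := hg
    have hS : S g = 0 := norm_le_zero_iff.mp (by simpa [hg'] using hdom g)
    simp [LinearMap.mem_ker, hψ, hS]
  set φq : (E ⧸ LinearMap.ker TL) →ₗ[ℂ] ℂ := (LinearMap.ker TL).liftQ ψ hker with hφq
  set φ₀ : ↥(LinearMap.range TL) →ₗ[ℂ] ℂ :=
    φq ∘ₗ (TL.quotKerEquivRange.symm : ↥(LinearMap.range TL) →ₗ[ℂ] (E ⧸ LinearMap.ker TL))
    with hφ₀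
  have key : ∀ (g : E) (hm : TL g ∈ LinearMap.range TL), φ₀ ⟨TL g, hm⟩ = ⟪w, S g⟫_ℂ := by
    intro g hm
    have h1 : TL.quotKerEquivRange.symm ⟨TL g, hm⟩ = (LinearMap.ker TL).mkQ g :=
      TL.quotKerEquivRange_symm_apply_image g hm
    simp only [hφ₀, LinearMap.coe_comp, Function.comp_apply, LinearEquiv.coe_coe, h1,
      Submodule.mkQ_apply]
    exact hψ g
  have hbound : ∀ x : ↥(LinearMap.range TL), ‖φ₀ x‖ ≤ (c * ‖w‖) * ‖x‖ := by
    rintro ⟨x, g, rfl⟩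
    rw [key g ⟨g, rfl⟩]
    calc ‖⟪w, S g⟫_ℂ‖ ≤ ‖w‖ * ‖S g‖ := norm_inner_le_norm _ _
      _ ≤ ‖w‖ * (c * ‖T g‖) := by
          exact mul_le_mul_of_nonneg_left (hdom g) (norm_nonneg w)
      _ = (c * ‖w‖) * ‖(⟨TL g, ⟨g, rfl⟩⟩ : ↥(LinearMap.range TL))‖ := by
          simp [hTL]; ring
  set φ : ↥(LinearMap.range TL) →L[ℂ] ℂ := LinearMap.mkContinuous φ₀ (c * ‖w‖) hbound with hφ
  set M : Submodule ℂ F := (LinearMap.range TL).topologicalClosure with hM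
  haveI : CompleteSpace ↥M :=
    (Submodule.isClosed_topologicalClosure _).isComplete.completeSpace_coe
  set ιl : ↥(LinearMap.range TL) →ₗ[ℂ] ↥M :=
    Submodule.inclusion (Submodule.le_topologicalClosure _) with hιl
  have hιnorm : ∀ x : ↥(LinearMap.range TL), ‖ιl x‖ = ‖x‖ := fun x => rfl
  set ι : ↥(LinearMap.range TL) →L[ℂ] ↥M :=
    LinearMap.mkContinuous ιl 1 (fun x => by rw [hιnorm]; simp) with hι
  have h_e : ∀ x : ↥(LinearMap.range TL), ‖x‖ ≤ (1 : NNReal) * ‖ι x‖ := by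
    intro x
    simp [hι, LinearMap.mkContinuous_apply, hιnorm]
  have hdense : DenseRange ι := by
    intro x
    rw [Metric.mem_closure_iff]
    intro ε hε
    have hx : (x : F) ∈ closure ((LinearMap.range TL : Submodule ℂ F) : Set F) := by
      have h2 : (x : F) ∈ (LinearMap.range TL).topologicalClosure := x.2
      rwa [← SetLike.mem_coe, Submodule.topologicalClosure_coe] at h2
    rw [Metric.mem_closure_iff] at hx
    obtain ⟨y, hy, hdy⟩ := hx ε hε
    exact ⟨ι ⟨y, hy⟩, Set.mem_range_self _, by rwa [Subtype.dist_eq]⟩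
  set φex : ↥M →L[ℂ] ℂ :=
    φ.extend ι with hφex
  have hφexnorm : ‖φex‖ ≤ (1 : NNReal) * ‖φ‖ := ContinuousLinearMap.opNorm_extend_le (f := φ) (e := ι) hdense h_e
  set v : ↥M := (InnerProductSpace.toDual ℂ ↥M).symm φex with hv
  refine ⟨(v : F), ?_, ?_⟩
  · have h1 : ‖(v : F)‖ = ‖v‖ := rfl
    have h2 : ‖v‖ = ‖φex‖ := LinearIsometryEquiv.norm_map _ _
    have h3 : ‖φ‖ ≤ c * ‖w‖ :=
      LinearMap.mkContinuous_norm_le _ (by positivity) _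
    rw [h1, h2]
    calc ‖φex‖ ≤ (1 : NNReal) * ‖φ‖ := hφexnorm
      _ = ‖φ‖ := by simp
      _ ≤ c * ‖w‖ := h3
  · intro g
    have hmem : TL g ∈ LinearMap.range TL := ⟨g, rfl⟩
    have h1 : ⟪v, ι ⟨TL g, hmem⟩⟫_ℂ = φex (ι ⟨TL g, hmem⟩) :=
      InnerProductSpace.toDual_symm_apply
    have h2 : φex (ι ⟨TL g, hmem⟩) = φ ⟨TL g, hmem⟩ := ContinuousLinearMap.extend_eq (f := φ) (e := ι) hdense
      (isUniformEmbedding_of_bound _ h_e).isUniformInducing _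
    have h3 : φ ⟨TL g, hmem⟩ = ⟪w, S g⟫_ℂ := key g hmem
    have h4 : ⟪v, ι ⟨TL g, hmem⟩⟫_ℂ = ⟪(v : F), T g⟫_ℂ := Submodule.coe_inner _ _ _
    have h5 : ⟪(v : F), T g⟫_ℂ = ⟪w, S g⟫_ℂ := by rw [← h4, h1, h2, h3]
    calc ⟪T g, (v : F)⟫_ℂ = conj ⟪(v : F), T g⟫_ℂ := (inner_conj_symm _ _).symm
      _ = conj ⟪w, S g⟫_ℂ := by rw [h5]
      _ = ⟪S g, w⟫_ℂ := inner_conj_symm _ _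

lemma B1_mem_biorthogonal
    {E H K : Type}
    [NormedAddCommGroup E] [InnerProductSpace ℂ E] [CompleteSpace E]
    [NormedAddCommGroup H] [InnerProductSpace ℂ H] [CompleteSpace H]
    [NormedAddCommGroup K] [InnerProductSpace ℂ K] [CompleteSpace K]
    (A : E →L[ℂ] H) (B B₁ B₂ : E →L[ℂ] K)
    (hsum : B = B₁ + B₂) (horth : ∀ f g : E, ⟪B₁ f, B₂ g⟫_ℂ = 0)
    (W : AlmostDominatedWitness A B₁) (h : E) :
    B₁ h ∈ ((DAB A B)ᗮ)ᗮ := by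
  letI := W.nacg
  letI := W.ips
  letI := W.cs
  have hB1le : ∀ f : E, ‖B₁ f‖ ≤ ‖B f‖ := by
    intro f
    have h2 : ‖B f‖ ^ 2 = ‖B₁ f‖ ^ 2 + ‖B₂ f‖ ^ 2 := by
      have h3 := norm_add_sq (𝕜 := ℂ) (B₁ f) (B₂ f)
      rw [hsum]
      simp only [ContinuousLinearMap.add_apply]
      rw [h3, horth f f]
      simp
    nlinarith [norm_nonneg (B f), norm_nonneg (B₁ f), norm_nonneg (B₂ f)]
  have hmono : ∀ f : E, Monotone (fun n => ‖W.Bn n f‖) := fun f =>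
    monotone_nat_of_le_succ (fun n => W.mono n f)
  have hn_le : ∀ (n : ℕ) (f : E), ‖W.Bn n f‖ ≤ ‖B₁ f‖ := fun n f =>
    (hmono f).ge_of_tendsto (W.tendsto f) n
  rw [Submodule.mem_orthogonal]
  intro k hk
  have hrle : (LinearMap.range (B : E →ₗ[ℂ] K))ᗮ ≤ DAB A B := by
    intro y hy
    have hBy : adjoint B y = 0 := by
      apply ext_inner_right ℂ
      intro f
      rw [adjoint_inner_left]
      have h0 : ⟪B f, y⟫_ℂ = 0 := hy (B f) (LinearMap.mem_range_self _ f)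
      have h1 : ⟪y, B f⟫_ℂ = 0 := by rw [← inner_conj_symm, h0, map_zero]
      rw [h1, inner_zero_left]
    rw [DAB, Submodule.mem_comap, ContinuousLinearMap.coe_coe, hBy]
    exact Submodule.zero_mem _
  have hkclo : k ∈ closure ((LinearMap.range (B : E →ₗ[ℂ] K) : Submodule ℂ K) : Set K) := by
    have h1 : k ∈ ((LinearMap.range (B : E →ₗ[ℂ] K) : Submodule ℂ K)ᗮ)ᗮ :=
      Submodule.orthogonal_le hrle hk
    rw [Submodule.orthogonal_orthogonal_eq_closure] at h1
    rwa [← SetLike.mem_coe, Submodule.topologicalClosure_coe] at h1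
  have key : ∀ ε > (0 : ℝ), ‖⟪k, B₁ h⟫_ℂ‖ ≤ ε := by
    intro ε hε
    set δ : ℝ := ε / (2 * (‖B₁ h‖ + 1)) with hδ
    have hδpos : 0 < δ := by positivity
    rw [Metric.mem_closure_iff] at hkclo
    obtain ⟨y, hy, hdy⟩ := hkclo δ hδpos
    rw [SetLike.mem_coe] at hy
    obtain ⟨g, rfl⟩ := hy
    rw [dist_eq_norm] at hdy
    have hnb : ∀ n : ℕ, ‖⟪W.Bn n g, W.Bn n h⟫_ℂ‖ ≤ δ * ‖B₁ h‖ := by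
      intro n
      have hd1 : ∀ f, ‖W.Bn n f‖ ≤ 1 * ‖B f‖ := fun f => by
        rw [one_mul]; exact (hn_le n f).trans (hB1le f)
      obtain ⟨d, hdnorm, hdinner⟩ := douglas_lemma B (W.Bn n) 1 one_pos.le hd1 (W.Bn n h)
      obtain ⟨eH, _, heH⟩ :=
        douglas_lemma A (W.Bn n) (W.c n) (W.c_nonneg n) (fun f => W.bound n f) (W.Bn n h)
      have hdD : d ∈ DAB A B := by
        rw [DAB, Submodule.mem_comap]
        refine ⟨eH, ?_⟩
        apply ext_inner_right ℂ
        intro f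
        rw [ContinuousLinearMap.coe_coe, ContinuousLinearMap.coe_coe, adjoint_inner_left,
          adjoint_inner_left]
        have h1 : ⟪B f, d⟫_ℂ = ⟪A f, eH⟫_ℂ := by rw [hdinner f, heH f]
        calc ⟪eH, A f⟫_ℂ = conj ⟪A f, eH⟫_ℂ := (inner_conj_symm _ _).symm
          _ = conj ⟪B f, d⟫_ℂ := by rw [h1]
          _ = ⟪d, B f⟫_ℂ := inner_conj_symm _ _
      have hkd : ⟪k, d⟫_ℂ = 0 := by
        have h2 : ⟪d, k⟫_ℂ = 0 := (Submodule.mem_orthogonal _ _).mp hk d hdD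
        rw [← inner_conj_symm, h2, map_zero]
      have h4 : ‖d‖ ≤ ‖B₁ h‖ := le_trans (by simpa using hdnorm) (hn_le n h)
      calc ‖⟪W.Bn n g, W.Bn n h⟫_ℂ‖ = ‖⟪B g, d⟫_ℂ‖ := by rw [hdinner g]
        _ = ‖⟪B g - k, d⟫_ℂ‖ := by rw [inner_sub_left, hkd, sub_zero]
        _ ≤ ‖B g - k‖ * ‖d‖ := norm_inner_le_norm _ _
        _ ≤ δ * ‖B₁ h‖ := by
            have h3 : ‖B g - k‖ ≤ δ := by rw [norm_sub_rev]; exact hdy.le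
            exact mul_le_mul h3 h4 (norm_nonneg d) hδpos.le
    have hc : ∀ u : E,
        Filter.Tendsto (fun n => (‖W.Bn n u‖ : ℂ)) Filter.atTop (nhds ((‖B₁ u‖ : ℂ))) :=
      fun u => (Complex.continuous_ofReal.tendsto _).comp (W.tendsto u)
    have heq : ∀ n : ℕ, ⟪W.Bn n g, W.Bn n h⟫_ℂ =
        ((‖W.Bn n (g + h)‖ : ℂ) ^ 2 - (‖W.Bn n (g - h)‖ : ℂ) ^ 2 +
          ((‖W.Bn n (g - (RCLike.I : ℂ) • h)‖ : ℂ) ^ 2 -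
            (‖W.Bn n (g + (RCLike.I : ℂ) • h)‖ : ℂ) ^ 2) * (RCLike.I : ℂ)) / 4 := by
      intro n
      rw [inner_eq_sum_norm_sq_div_four]
      simp only [← map_add, ← map_sub, ← map_smul]
      norm_num
    have htarget : ⟪B₁ g, B₁ h⟫_ℂ =
        ((‖B₁ (g + h)‖ : ℂ) ^ 2 - (‖B₁ (g - h)‖ : ℂ) ^ 2 +
          ((‖B₁ (g - (RCLike.I : ℂ) • h)‖ : ℂ) ^ 2 -
            (‖B₁ (g + (RCLike.I : ℂ) • h)‖ : ℂ) ^ 2) * (RCLike.I : ℂ)) / 4 := by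
      rw [inner_eq_sum_norm_sq_div_four]
      simp only [← map_add, ← map_sub, ← map_smul]
      norm_num
    have hlim : Filter.Tendsto (fun n => ⟪W.Bn n g, W.Bn n h⟫_ℂ) Filter.atTop
        (nhds ⟪B₁ g, B₁ h⟫_ℂ) := by
      rw [htarget]
      have hT := ((((hc (g + h)).pow 2).sub ((hc (g - h)).pow 2)).add
        ((((hc (g - (RCLike.I : ℂ) • h)).pow 2).sub
          ((hc (g + (RCLike.I : ℂ) • h)).pow 2)).mul_const (RCLike.I : ℂ))).div_const 4
      exact hT.congr (fun n => (heq n).symm)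
    have hBB1 : ‖⟪B₁ g, B₁ h⟫_ℂ‖ ≤ δ * ‖B₁ h‖ :=
      le_of_tendsto hlim.norm (Filter.Eventually.of_forall hnb)
    have hsplit : ⟪k, B₁ h⟫_ℂ = ⟪k - B g, B₁ h⟫_ℂ + ⟪B₁ g, B₁ h⟫_ℂ := by
      have h5 : ⟪B g, B₁ h⟫_ℂ = ⟪B₁ g, B₁ h⟫_ℂ := by
        rw [hsum]
        simp only [ContinuousLinearMap.add_apply, inner_add_left]
        have h6 : ⟪B₂ g, B₁ h⟫_ℂ = 0 := by
          rw [← inner_conj_symm, horth h g, map_zero]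
        rw [h6, add_zero]
      rw [inner_sub_left, h5]; ring
    have hδe : δ * (‖B₁ h‖ + 1) = ε / 2 := by
      rw [hδ]; field_simp
    calc ‖⟪k, B₁ h⟫_ℂ‖ ≤ ‖⟪k - B g, B₁ h⟫_ℂ‖ + ‖⟪B₁ g, B₁ h⟫_ℂ‖ := by
          rw [hsplit]; exact norm_add_le _ _
      _ ≤ ‖k - B g‖ * ‖B₁ h‖ + δ * ‖B₁ h‖ :=
          add_le_add (norm_inner_le_norm _ _) hBB1
      _ ≤ δ * ‖B₁ h‖ + δ * ‖B₁ h‖ := by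
          have := hdy.le
          simp only [ContinuousLinearMap.coe_coe] at this
          nlinarith [norm_nonneg (B₁ h)]
      _ ≤ ε := by nlinarith [norm_nonneg (B₁ h), hδpos]
  have h0 : ‖⟪k, B₁ h⟫_ℂ‖ ≤ 0 :=
    le_of_forall_pos_le_add (fun ε hε => by simpa using key ε hε)
  exact norm_le_zero_iff.mp h0

/-- Let `B = B₁ + B₂` be any Lebesgue type decomposition of `B` with
respect to `A`, and let `B_reg = (I − P) ∘ B`, where `P` is the orthogonal projection of `K`
onto `D(A,B)ᗮ` (characterized by `P k ∈ D(A,B)ᗮ` and `k - P k ⊥ D(A,B)ᗮ`). Then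
`‖B₁ h‖ ≤ ‖B_reg h‖` for all `h ∈ E`. -/
theorem regular_part_maximal
    {E H K : Type}
    [NormedAddCommGroup E] [InnerProductSpace ℂ E] [CompleteSpace E]
    [NormedAddCommGroup H] [InnerProductSpace ℂ H] [CompleteSpace H]
    [NormedAddCommGroup K] [InnerProductSpace ℂ K] [CompleteSpace K]
    (A : E →L[ℂ] H) (B B₁ B₂ : E →L[ℂ] K)
    (hdec : IsLebesgueTypeDecomp A B B₁ B₂)
    (P : K →L[ℂ] K)
    (hP : ∀ k : K, P k ∈ (DAB A B)ᗮ ∧ k - P k ∈ ((DAB A B)ᗮ)ᗮ) :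
    ∀ h : E, ‖B₁ h‖ ≤ ‖(B - P ∘L B) h‖ := by
  obtain ⟨hsum, horth, ⟨W⟩, _⟩ := hdec
  intro h
  have hmem := B1_mem_biorthogonal A B B₁ B₂ hsum horth W h
  have hPmem : P (B h) ∈ (DAB A B)ᗮ := (hP (B h)).1
  have hip : ⟪B₁ h, P (B h)⟫_ℂ = 0 := by
    have h1 : ⟪P (B h), B₁ h⟫_ℂ = 0 := (Submodule.mem_orthogonal _ _).mp hmem _ hPmem
    rw [← inner_conj_symm, h1, map_zero]
  have h2 : ⟪B₁ h, (B - P ∘L B) h⟫_ℂ = (‖B₁ h‖ : ℂ) ^ 2 := by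
    simp only [ContinuousLinearMap.sub_apply, ContinuousLinearMap.comp_apply,
      inner_sub_right, hip, sub_zero]
    rw [hsum]
    simp only [ContinuousLinearMap.add_apply, inner_add_right, horth h h, add_zero]
    exact inner_self_eq_norm_sq_to_K _
  have h3 : ‖B₁ h‖ ^ 2 ≤ ‖B₁ h‖ * ‖(B - P ∘L B) h‖ := by
    have h4 := norm_inner_le_norm (𝕜 := ℂ) (B₁ h) ((B - P ∘L B) h)
    rw [h2] at h4
    simpa [norm_pow] using h4
  nlinarith [norm_nonneg (B₁ h), norm_nonneg ((B - P ∘L B) h)]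
end
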